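/- arXiv:1308.4116 — 4 statements merged into one kernel-verified Lean document; each statement's English description precedes it below -/
import Mathlib

section
/- Suppose Ω ⊆ ℙ(ℂ^{d+1}) is a proper linearly convex open set. Then (1) for every p ∈ Ω and R > 0 the closed Hilbert-metric ball B_R(p) = {q ∈ Ω : d_Ω(p,q) ≤ R} is a compact subset of Ω in the subspace topology, and (2) the subspace topology on Ω inherited from ℙ(ℂ^{d+1}) coincides with the topology induced by the Hilbert metric d_Ω. -/
open scoped LinearAlgebra.Projectivization MatrixGroups
open Projectivization

noncomputable section
namespace ComplexConvex

/-! ### Complex projective space and `PSL(d+1, ℂ)` -/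

/-- The underlying vector space `ℂ^{d+1}`. -/
abbrev Vd (d : ℕ) : Type := Fin (d + 1) → ℂ

/-- Complex projective space `ℙ(ℂ^{d+1})`. -/
abbrev CP (d : ℕ) : Type := ℙ ℂ (Vd d)

instance (d : ℕ) : TopologicalSpace (CP d) := instTopologicalSpaceQuotient

abbrev SLd (d : ℕ) : Type := Matrix.SpecialLinearGroup (Fin (d + 1)) ℂ

instance (d : ℕ) : TopologicalSpace (SLd d) :=
  TopologicalSpace.induced (fun g => (g : Matrix (Fin (d + 1)) (Fin (d + 1)) ℂ)) inferInstance

/-- `PSL(d+1, ℂ)`, the quotient of `SL(d+1, ℂ)` by its center. -/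
abbrev PSLd (d : ℕ) : Type := Matrix.ProjectiveSpecialLinearGroup (Fin (d + 1)) ℂ

/-- The projective transformation of `ℙ(ℂ^{d+1})` induced by an element of `SL(d+1,ℂ)`. -/
def slEquiv {d : ℕ} (g : SLd d) : Equiv.Perm (CP d) where
  toFun := Projectivization.map (Matrix.SpecialLinearGroup.toLin' g).toLinearMap
      (Matrix.SpecialLinearGroup.toLin' g).injective
  invFun := Projectivization.map (Matrix.SpecialLinearGroup.toLin' g).symm.toLinearMap
      (Matrix.SpecialLinearGroup.toLin' g).symm.injective
  left_inv := by
    intro x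
    induction x using Projectivization.ind with
    | h v hv => rw [Projectivization.map_mk, Projectivization.map_mk]; simp
  right_inv := by
    intro x
    induction x using Projectivization.ind with
    | h v hv => rw [Projectivization.map_mk, Projectivization.map_mk]; simp

/-- The action of `SL(d+1,ℂ)` on `ℙ(ℂ^{d+1})`, as a homomorphism into permutations. -/
def slPerm (d : ℕ) : SLd d →* Equiv.Perm (CP d) where
  toFun := slEquiv
  map_one' := by
    ext x
    induction x using Projectivization.ind with
    | h v hv =>
      simp only [slEquiv, Equiv.coe_fn_mk, Equiv.Perm.coe_one, id_eq]
      rw [Projectivization.map_mk]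
      simp
  map_mul' g h := by
    ext x
    induction x using Projectivization.ind with
    | h v hv =>
      simp only [slEquiv, Equiv.coe_fn_mk, Equiv.Perm.mul_apply]
      rw [Projectivization.map_mk, Projectivization.map_mk, Projectivization.map_mk]
      simp

/-- The action of `PSL(d+1,ℂ)` on `ℙ(ℂ^{d+1})`. -/
def pslPerm (d : ℕ) : PSLd d →* Equiv.Perm (CP d) :=
  QuotientGroup.lift _ (slPerm d) (by
    intro g hg
    obtain ⟨r, hr, hscalar⟩ := Matrix.SpecialLinearGroup.mem_center_iff.mp hg
    have hr0 : r ≠ 0 := by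
      intro h
      rw [h] at hr
      simp at hr
    ext x
    induction x using Projectivization.ind with
    | h v hv =>
      simp only [slPerm, slEquiv, MonoidHom.coe_mk, OneHom.coe_mk, Equiv.coe_fn_mk,
        Equiv.Perm.coe_one, id_eq]
      rw [Projectivization.map_mk]
      have hval : (Matrix.SpecialLinearGroup.toLin' g).toLinearMap v = r • v := by
        show Matrix.SpecialLinearGroup.toLin' g v = r • v
        rw [Matrix.SpecialLinearGroup.toLin'_apply, Matrix.toLin'_apply, ← hscalar,
          Matrix.scalar_apply]
        funext i
        simp [Matrix.mulVec_diagonal, Pi.smul_apply, smul_eq_mul]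
      rw [Projectivization.mk_eq_mk_iff]
      exact ⟨Units.mk0 r hr0, by simp [hval]⟩)

/-! ### Projective subspaces and convexity notions -/

/-- The projective subspace associated with a linear subspace. -/
def projSet {d : ℕ} (W : Submodule ℂ (Vd d)) : Set (CP d) :=
  {x : CP d | x.submodule ≤ W}

/-- A complex projective line: the projectivization of a 2-dimensional subspace. -/
def IsProjLine {d : ℕ} (L : Set (CP d)) : Prop :=
  ∃ W : Submodule ℂ (Vd d), Module.finrank ℂ W = 2 ∧ L = projSet W

/-- A complex projective hyperplane: the projectivization of a `d`-dimensional subspace. -/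
def IsProjHyperplane {d : ℕ} (H : Set (CP d)) : Prop :=
  ∃ W : Submodule ℂ (Vd d), Module.finrank ℂ W = d ∧ H = projSet W

/-- `Ω` is `ℂ`-convex: its intersection with every complex projective line, and the
complement of this intersection in the line, are connected. -/
def CConvex {d : ℕ} (Ω : Set (CP d)) : Prop :=
  ∀ L : Set (CP d), IsProjLine L → IsPreconnected (L ∩ Ω) ∧ IsPreconnected (L \ Ω)

/-- `Ω` is proper: its closure contains no complex projective line. -/
def IsProperDomain {d : ℕ} (Ω : Set (CP d)) : Prop :=
  ∀ L : Set (CP d), IsProjLine L → ¬ L ⊆ closure Ω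

/-- `Ω` is linearly convex: every point of the complement lies on a complex hyperplane
missing `Ω`. -/
def LinearlyConvex {d : ℕ} (Ω : Set (CP d)) : Prop :=
  ∀ p ∈ (Set.univ : Set (CP d)) \ Ω, ∃ H : Set (CP d),
    IsProjHyperplane H ∧ p ∈ H ∧ H ∩ Ω = ∅

/-- `Ω` is weakly linearly convex: every boundary point lies on a complex hyperplane
missing `Ω`. -/
def WeaklyLinearlyConvex {d : ℕ} (Ω : Set (CP d)) : Prop :=
  ∀ p ∈ frontier Ω, ∃ H : Set (CP d), IsProjHyperplane H ∧ p ∈ H ∧ H ∩ Ω = ∅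

/-- `H` is a complex tangent hyperplane of `Ω` at the boundary point `p`. -/
def IsTangentHyperplaneAt {d : ℕ} (Ω H : Set (CP d)) (p : CP d) : Prop :=
  IsProjHyperplane H ∧ p ∈ frontier Ω ∧ p ∈ H ∧ H ∩ Ω = ∅

/-- `Ω` is strictly `ℂ`-convex: every complex tangent hyperplane of `Ω` meets the boundary
at exactly one point. -/
def StrictlyCConvex {d : ℕ} (Ω : Set (CP d)) : Prop :=
  ∀ (H : Set (CP d)) (p : CP d), IsTangentHyperplaneAt Ω H p → H ∩ frontier Ω = {p}

/-! ### `C^k` boundaries and projective balls -/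

/-- A point lies in the affine chart associated to the linear automorphism `A`. -/
def InChart {d : ℕ} (A : Vd d ≃ₗ[ℂ] Vd d) (x : CP d) : Prop :=
  A x.rep 0 ≠ 0

/-- The affine coordinates of a point in the affine chart associated to `A`. -/
def chartMap {d : ℕ} (A : Vd d ≃ₗ[ℂ] Vd d) (x : CP d) : Fin d → ℂ :=
  fun i => A x.rep i.succ / A x.rep 0

/-- `Ω` has `C^k` boundary: near every boundary point, in some affine chart, the boundary
is the regular zero set of a real-valued `C^k` function. -/
def HasCkBoundary {d : ℕ} (k : WithTop ℕ∞) (Ω : Set (CP d)) : Prop :=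
  ∀ x ∈ frontier Ω, ∃ A : Vd d ≃ₗ[ℂ] Vd d, InChart A x ∧
    ∃ (U : Set (Fin d → ℂ)) (F : (Fin d → ℂ) → ℝ),
      IsOpen U ∧ chartMap A x ∈ U ∧ ContDiffOn ℝ k F U ∧
      (∀ u ∈ U, fderivWithin ℝ F U u ≠ 0) ∧
      (∀ y : CP d, InChart A y → chartMap A y ∈ U → (y ∈ frontier Ω ↔ F (chartMap A y) = 0))

/-- `Ω` is a projective ball: in suitable homogeneous coordinates it is
`{[1 : z₁ : ⋯ : z_d] : ∑ |zᵢ|² < 1}`. -/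
def IsProjBall {d : ℕ} (Ω : Set (CP d)) : Prop :=
  ∃ b : Module.Basis (Fin (d + 1)) ℂ (Vd d),
    Ω = {x : CP d | b.repr x.rep 0 ≠ 0 ∧
      ∑ i : Fin d, ‖b.repr x.rep i.succ / b.repr x.rep 0‖ ^ 2 < 1}

/-! ### Automorphisms, dividing groups -/

/-- The group of projective automorphisms of `Ω`, as a subgroup of `PSL(d+1,ℂ)`. -/
def Aut {d : ℕ} (Ω : Set (CP d)) : Subgroup (PSLd d) where
  carrier := {φ : PSLd d | pslPerm d φ '' Ω = Ω}
  one_mem' := by simp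
  mul_mem' := by
    intro a b ha hb
    simp only [Set.mem_setOf_eq] at ha hb ⊢
    have h : ⇑(pslPerm d (a * b)) = ⇑(pslPerm d a) ∘ ⇑(pslPerm d b) := by
      rw [map_mul]; rfl
    rw [h, Set.image_comp, hb, ha]
  inv_mem' := by
    intro a ha
    simp only [Set.mem_setOf_eq] at ha ⊢
    have h : ⇑(pslPerm d a⁻¹) ∘ ⇑(pslPerm d a) = id := by
      funext x
      rw [map_inv]
      exact Equiv.symm_apply_apply _ _
    calc pslPerm d a⁻¹ '' Ω = pslPerm d a⁻¹ '' (pslPerm d a '' Ω) := by rw [ha]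
      _ = (⇑(pslPerm d a⁻¹) ∘ ⇑(pslPerm d a)) '' Ω := by rw [Set.image_comp]
      _ = Ω := by rw [h, Set.image_id]

/-- `φ` belongs to the identity component `Aut₀(Ω)` of `Aut(Ω)`. -/
def InAut0 {d : ℕ} (Ω : Set (CP d)) (φ : PSLd d) : Prop :=
  ∃ h : φ ∈ Aut Ω, (⟨φ, h⟩ : Aut Ω) ∈ connectedComponent (1 : Aut Ω)

/-- A subgroup `Γ ≤ PSL(d+1,ℂ)` divides `Ω`: it preserves `Ω` and `Γ ⬝ K = Ω` for some
compact `K ⊆ Ω`. -/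
def Divides {d : ℕ} (Γ : Subgroup (PSLd d)) (Ω : Set (CP d)) : Prop :=
  (∀ γ ∈ Γ, pslPerm d γ '' Ω = Ω) ∧
    ∃ K : Set (CP d), K ⊆ Ω ∧ IsCompact K ∧ (⋃ γ ∈ Γ, pslPerm d γ '' K) = Ω

/-- `Ω` is divisible: some discrete subgroup of `PSL(d+1,ℂ)` divides it. -/
def Divisible {d : ℕ} (Ω : Set (CP d)) : Prop :=
  ∃ Γ : Subgroup (PSLd d), DiscreteTopology Γ ∧ Divides Γ Ω

/-- A subgroup is torsion free. -/
def TorsionFree {d : ℕ} (Γ : Subgroup (PSLd d)) : Prop :=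
  ∀ γ ∈ Γ, γ ≠ 1 → ∀ n : ℕ, 0 < n → γ ^ n ≠ 1

/-! ### The Hilbert metric -/

/-- The projectivization of the dual space. -/
abbrev DualP (d : ℕ) : Type := ℙ ℂ (Module.Dual ℂ (Vd d))

/-- The complex dual `Ω*` of `Ω`. -/
def dualSet {d : ℕ} (Ω : Set (CP d)) : Set (DualP d) :=
  {f : DualP d | ∀ x ∈ Ω, f.rep (Projectivization.rep x) ≠ 0}

/-- The Hilbert (Dubois) metric of a proper linearly convex set. -/
def hilbertDist {d : ℕ} (Ω : Set (CP d)) (v w : CP d) : ℝ :=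
  sSup {r : ℝ | ∃ f ∈ dualSet Ω, ∃ g ∈ dualSet Ω,
    r = Real.log ((‖f.rep v.rep‖ * ‖g.rep w.rep‖) /
        (‖f.rep w.rep‖ * ‖g.rep v.rep‖))}

/-! ### Eigenvalues, proximality -/

/-- The ordered list of moduli of the eigenvalues (with multiplicity) of a matrix. -/
def eigMods {d : ℕ} (g : Matrix (Fin (d + 1)) (Fin (d + 1)) ℂ) : List ℝ :=
  ((g.charpoly.roots).map (fun z : ℂ => ‖z‖)).sort (· ≤ ·)

/-- `σ_i(g)` for `i = 1, …, d+1`: the `i`-th smallest modulus of an eigenvalue of `g`. -/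
def sigma' {d : ℕ} (g : Matrix (Fin (d + 1)) (Fin (d + 1)) ℂ) (i : ℕ) : ℝ :=
  (eigMods g).getD (i - 1) 0

/-- An element of `PSL(d+1,ℂ)` is proximal if `σ_d < σ_{d+1}` (for any lift, the property
being independent of the lift). -/
def IsProximal {d : ℕ} (φ : PSLd d) : Prop :=
  ∀ g : SLd d, (QuotientGroup.mk g : PSLd d) = φ →
    sigma' (g : Matrix (Fin (d + 1)) (Fin (d + 1)) ℂ) d <
      sigma' (g : Matrix (Fin (d + 1)) (Fin (d + 1)) ℂ) (d + 1)

/-- Bi-proximal elements: `φ` and `φ⁻¹` are proximal. -/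
def IsBiProximal {d : ℕ} (φ : PSLd d) : Prop :=
  IsProximal φ ∧ IsProximal φ⁻¹

/-- Almost unipotent elements: all eigenvalue moduli equal `1`. -/
def IsAlmostUnipotent {d : ℕ} (φ : PSLd d) : Prop :=
  ∀ g : SLd d, (QuotientGroup.mk g : PSLd d) = φ →
    ∀ r ∈ eigMods (g : Matrix (Fin (d + 1)) (Fin (d + 1)) ℂ), r = 1

/-- `x` is the attracting fixed point `x⁺_φ`: an eigenline for an eigenvalue of modulus
`σ_{d+1}`. -/
def IsAttractingPoint {d : ℕ} (φ : PSLd d) (x : CP d) : Prop :=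
  ∀ g : SLd d, (QuotientGroup.mk g : PSLd d) = φ →
    ∃ μ : ℂ, ‖μ‖ = sigma' (g : Matrix (Fin (d + 1)) (Fin (d + 1)) ℂ) (d + 1) ∧
      (g : Matrix (Fin (d + 1)) (Fin (d + 1)) ℂ).mulVec x.rep = μ • x.rep

/-- `x` is the repelling fixed point `x⁻_φ`: an eigenline for an eigenvalue of modulus
`σ_1`. -/
def IsRepellingPoint {d : ℕ} (φ : PSLd d) (x : CP d) : Prop :=
  ∀ g : SLd d, (QuotientGroup.mk g : PSLd d) = φ →
    ∃ μ : ℂ, ‖μ‖ = sigma' (g : Matrix (Fin (d + 1)) (Fin (d + 1)) ℂ) 1 ∧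
      (g : Matrix (Fin (d + 1)) (Fin (d + 1)) ℂ).mulVec x.rep = μ • x.rep

/-- The operator norm of a matrix with respect to the standard Hermitian norm on
`ℂ^{d+1}`. -/
def opNorm {d : ℕ} (g : Matrix (Fin (d + 1)) (Fin (d + 1)) ℂ) : ℝ :=
  ‖Matrix.toEuclideanCLM (𝕜 := ℂ) g‖

/-! ### Quasi-isometries, word metrics, the Apollonian metric -/

/-- `f` is an `(A,B)`-quasi-isometric embedding with respect to the distance functions
`dX` and `dY`. -/
def IsQIEmbedding {X Y : Type*} (dX : X → X → ℝ) (dY : Y → Y → ℝ)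
    (A B : ℝ) (f : X → Y) : Prop :=
  ∀ x₁ x₂ : X, (1 / A) * dX x₁ x₂ - B ≤ dY (f x₁) (f x₂) ∧
    dY (f x₁) (f x₂) ≤ A * dX x₁ x₂ + B

/-- `f` is an `(A,B)`-quasi-isometry. -/
def IsQuasiIsometry {X Y : Type*} (dX : X → X → ℝ) (dY : Y → Y → ℝ)
    (A B : ℝ) (f : X → Y) : Prop :=
  IsQIEmbedding dX dY A B f ∧ ∃ R > 0, ∀ y : Y, ∃ x : X, dY y (f x) ≤ R

/-- `(X, dX)` is a quasi-geodesic space: for some `(A,B)`, any two points lie on the image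
of an `(A,B)`-quasi-geodesic segment (an `(A,B)`-quasi-isometric embedding of a finite
integer interval with its standard metric). -/
def IsQuasiGeodesicSpace {X : Type*} (dX : X → X → ℝ) : Prop :=
  ∃ A B : ℝ, 0 < A ∧ ∀ x y : X, ∃ (N : ℕ) (f : Fin N → X),
    (∃ i : Fin N, f i = x) ∧ (∃ j : Fin N, f j = y) ∧
    IsQIEmbedding (fun m n : Fin N => |(m : ℝ) - (n : ℝ)|) dX A B f

/-- The word metric on a group with respect to a generating set `S`. -/
def wordDist {Γ : Type*} [Group Γ] (S : Set Γ) (γ₁ γ₂ : Γ) : ℝ :=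
  sInf {r : ℝ | ∃ l : List Γ, (∀ s ∈ l, s ∈ S ∪ S⁻¹) ∧ l.prod = γ₂⁻¹ * γ₁ ∧
    r = l.length}

/-- The Apollonian metric of a bounded set `Ω ⊆ ℂ`, the supremum being taken over
`b₁, b₂ ∈ (ℂ ∪ {∞}) ∖ Ω` with the convention `|z−∞|/|w−∞| = 1` (the terms where `b₁`
and/or `b₂` equal `∞` are listed separately). -/
def apollonianDist (Ω : Set ℂ) (z w : ℂ) : ℝ :=
  sSup ({(0 : ℝ)} ∪
    {r : ℝ | ∃ b ∈ Ωᶜ, r = Real.log (dist z b / dist w b)} ∪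
    {r : ℝ | ∃ b ∈ Ωᶜ, r = Real.log (dist w b / dist z b)} ∪
    {r : ℝ | ∃ b₁ ∈ Ωᶜ, ∃ b₂ ∈ Ωᶜ,
      r = Real.log ((dist z b₁ * dist w b₂) / (dist w b₁ * dist z b₂))})

/-- A `C¹` embedding of the circle into `ℂ`, parameterized `2π`-periodically by `ℝ`. -/
def IsC1CircleEmbedding (f : ℝ → ℂ) : Prop :=
  ContDiff ℝ 1 f ∧ Function.Periodic f (2 * Real.pi) ∧
    Set.InjOn f (Set.Ico 0 (2 * Real.pi)) ∧ ∀ θ : ℝ, deriv f θ ≠ 0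

/-- `Ω` is the bounded open set bounded by the image of the circle embedding `f`. -/
def IsInteriorDomainOf (f : ℝ → ℂ) (Ω : Set ℂ) : Prop :=
  IsOpen Ω ∧ Bornology.IsBounded Ω ∧ IsConnected Ω ∧
    frontier Ω = Set.range f ∧ Ω ∩ Set.range f = ∅


/-! ## auxiliary development -/
section Aux
open Matrix

variable {d : ℕ}

/-- nonzero vectors -/
def nzS (d : ℕ) : Set (Vd d) := {v | v ≠ 0}

/-- quotient map to projective space -/
def mkP : ↥(nzS d) → CP d := fun v => Projectivization.mk ℂ v.1 v.2

lemma continuous_mkP : Continuous (mkP (d := d)) := continuous_quotient_mk'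

lemma nzS_ne (v : ↥(nzS d)) : v.1 ≠ 0 := v.2

lemma mkP_eq_mk (v : ↥(nzS d)) : mkP v = Projectivization.mk ℂ v.1 (nzS_ne v) := rfl

lemma exists_unit_rep {V : Type*} [AddCommGroup V] [Module ℂ V] {v : V} (h : v ≠ 0) :
    ∃ a : ℂˣ, (Projectivization.mk ℂ v h).rep = (a : ℂ) • v := by
  have h2 := Projectivization.mk_rep (Projectivization.mk ℂ v h)
  rw [Projectivization.mk_eq_mk_iff] at h2
  obtain ⟨a, ha⟩ := h2
  exact ⟨a, ha.symm⟩

lemma isOpenMap_mkP : IsOpenMap (mkP (d := d)) := by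
  intro U hU
  have : IsOpen (mkP ⁻¹' (mkP '' U)) := by
    have heq : mkP ⁻¹' (mkP '' U) = ⋃ a : ℂˣ,
        (fun v : ↥(nzS d) => (⟨(a : ℂ) • v.1, fun h0 => v.2 (by
          have := congrArg (fun w => (a⁻¹ : ℂ) • w) h0
          simpa [smul_smul] using this)⟩ : ↥(nzS d))) '' U := by
      ext v
      simp only [Set.mem_preimage, Set.mem_image, Set.mem_iUnion]
      constructor
      · rintro ⟨u, hu, huv⟩
        rw [mkP_eq_mk, mkP_eq_mk, Projectivization.mk_eq_mk_iff] at huv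
        obtain ⟨a, ha⟩ := huv
        refine ⟨a⁻¹, u, hu, ?_⟩
        apply Subtype.ext
        simp only
        rw [← ha]
        simp [Units.smul_def, smul_smul]
      · rintro ⟨a, u, hu, huv⟩
        refine ⟨u, hu, ?_⟩
        rw [mkP_eq_mk, mkP_eq_mk, Projectivization.mk_eq_mk_iff]
        refine ⟨a⁻¹, ?_⟩
        rw [← huv]
        simp [Units.smul_def, smul_smul]
    rw [heq]
    apply isOpen_iUnion
    intro a
    -- image under the scaling homeomorphism-like map equals preimage under inverse scaling
    have himg : (fun v : ↥(nzS d) => (⟨(a : ℂ) • v.1, fun h0 => v.2 (by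
          have := congrArg (fun w => (a⁻¹ : ℂ) • w) h0
          simpa [smul_smul] using this)⟩ : ↥(nzS d))) '' U =
        (fun v : ↥(nzS d) => (⟨(a⁻¹ : ℂ) • v.1, fun h0 => v.2 (by
          have := congrArg (fun w => (a : ℂ) • w) h0
          simpa [smul_smul] using this)⟩ : ↥(nzS d))) ⁻¹' U := by
      ext v
      simp only [Set.mem_image, Set.mem_preimage]
      constructor
      · rintro ⟨u, hu, rfl⟩
        convert hu using 1
        apply Subtype.ext
        simp [smul_smul]
      · intro hv
        refine ⟨_, hv, ?_⟩
        apply Subtype.ext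
        simp [smul_smul]
    rw [himg]
    have hcont : Continuous (fun v : ↥(nzS d) => (⟨(a⁻¹ : ℂ) • v.1, fun h0 => v.2 (by
          have := congrArg (fun w => (a : ℂ) • w) h0
          simpa [smul_smul] using this)⟩ : ↥(nzS d))) := by
      apply Continuous.subtype_mk
      exact (continuous_subtype_val : Continuous (fun v : ↥(nzS d) => v.1)).const_smul ((a : ℂ)⁻¹)
    exact hU.preimage hcont
  exact (isQuotientMap_quotient_mk'.isCoinducing.isOpen_preimage).mp this

lemma isCompact_univ_CP : IsCompact (Set.univ : Set (CP d)) := by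
  have hs : IsCompact (Metric.sphere (0 : Vd d) 1) := isCompact_sphere _ _
  classical
  set f : Vd d → CP d := fun v =>
    if h : v = 0 then Projectivization.mk ℂ (fun _ => 1)
      (by intro h0; have := congrFun h0 0; simp at this)
    else Projectivization.mk ℂ v h with hf
  have hcont : ContinuousOn f (nzS d) := by
    rw [continuousOn_iff_continuous_restrict]
    have : Set.domRestrict (nzS d) f = mkP := by
      funext v
      simp only [Set.domRestrict_apply, hf, mkP_eq_mk, dif_neg v.2]
    rw [this]; exact continuous_mkP
  have hsub : Metric.sphere (0 : Vd d) 1 ⊆ nzS d := by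
    intro v hv
    rw [Metric.mem_sphere, dist_zero_right] at hv
    intro h0; rw [h0] at hv; simp at hv
  have himg : f '' Metric.sphere (0 : Vd d) 1 = Set.univ := by
    apply Set.eq_univ_of_forall
    intro x
    have hx : x.rep ≠ 0 := Projectivization.rep_nonzero x
    refine ⟨((‖x.rep‖ : ℂ))⁻¹ • x.rep, ?_, ?_⟩
    · rw [Metric.mem_sphere, dist_zero_right]
      exact norm_smul_inv_norm (𝕜 := ℂ) hx
    · have hnz : (↑‖x.rep‖ : ℂ)⁻¹ • x.rep ≠ 0 := by
        apply smul_ne_zero _ hx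
        simp [norm_ne_zero_iff.mpr hx]
      rw [hf]; simp only [dif_neg hnz]
      conv_rhs => rw [← Projectivization.mk_rep x]
      rw [Projectivization.mk_eq_mk_iff]
      refine ⟨Units.mk0 ((‖x.rep‖ : ℂ))⁻¹ (by simp [norm_ne_zero_iff.mpr hx]), ?_⟩
      simp [Units.smul_def]
    
  rw [← himg]
  exact hs.image_of_continuousOn (hcont.mono hsub)

end Aux

section Dual
open Matrix

variable {d : ℕ} (Ω : Set (CP d))

/-- functional from coefficient vector -/
def toL (c : Vd d) : Module.Dual ℂ (Vd d) where
  toFun v := c ⬝ᵥ v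
  map_add' u v := dotProduct_add c u v
  map_smul' r v := by simp [dotProduct_smul, smul_eq_mul]

@[simp] lemma toL_apply (c v : Vd d) : toL c v = c ⬝ᵥ v := rfl

/-- coefficient vector of a functional -/
def vecOf (f : Module.Dual ℂ (Vd d)) : Vd d := fun i => f (Pi.single i 1)

lemma apply_eq_dot (f : Module.Dual ℂ (Vd d)) (v : Vd d) : f v = vecOf f ⬝ᵥ v := by
  rw [LinearMap.pi_apply_eq_sum_univ f v, dotProduct]
  apply Finset.sum_congr rfl
  intro i _
  have h : (Pi.single i (1 : ℂ) : Vd d) = (fun j => if i = j then 1 else 0) := by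
    funext j
    simp [Pi.single_apply, eq_comm]
  show v i • f (fun j => if i = j then 1 else 0) = f (Pi.single i 1) * v i
  rw [← h, smul_eq_mul, mul_comm]

lemma vecOf_ne_zero {f : Module.Dual ℂ (Vd d)} (hf : f ≠ 0) : vecOf f ≠ 0 := by
  intro h0
  apply hf
  apply LinearMap.ext
  intro v
  rw [apply_eq_dot, h0]
  simp

/-- the set of coefficient vectors of functionals with no zero on Ω -/
def Du : Set (Vd d) := {c | ∀ v : ↥(nzS d), mkP v ∈ Ω → c ⬝ᵥ v.1 ≠ 0}

/-- normalized dual vectors -/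
def Kd : Set (Vd d) := Du Ω ∩ Metric.sphere 0 1

lemma Du_smul {c : Vd d} (hc : c ∈ Du Ω) {a : ℂ} (ha : a ≠ 0) : a • c ∈ Du Ω := by
  intro v hv
  rw [smul_dotProduct, smul_eq_mul]
  exact mul_ne_zero ha (hc v hv)

lemma Du_dot_ne_zero {c : Vd d} (hc : c ∈ Du Ω) {x : CP d} (hx : x ∈ Ω) :
    c ⬝ᵥ x.rep ≠ 0 := by
  have := hc ⟨x.rep, Projectivization.rep_nonzero x⟩ (by
    rw [mkP_eq_mk]; rw [Projectivization.mk_rep]; exact hx)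
  exact this

/-- normalization into Kd -/
lemma exists_Kd_of_Du {c : Vd d} (hc : c ∈ Du Ω) (hc0 : c ≠ 0) :
    ∃ c' ∈ Kd Ω, ∃ t : ℝ, 0 < t ∧ ∀ v : Vd d,
      ‖c' ⬝ᵥ v‖ = t * ‖c ⬝ᵥ v‖ := by
  have hn : ‖c‖ ≠ 0 := norm_ne_zero_iff.mpr hc0
  refine ⟨((‖c‖ : ℂ))⁻¹ • c, ⟨Du_smul Ω hc (by simpa using hn), ?_⟩, ‖c‖⁻¹,
    by positivity, ?_⟩
  · rw [Metric.mem_sphere, dist_zero_right]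
    exact norm_smul_inv_norm (𝕜 := ℂ) hc0
  · intro v
    rw [smul_dotProduct, smul_eq_mul, norm_mul, norm_inv]
    congr 1
    simp [Complex.norm_real, Real.norm_eq_abs, abs_of_nonneg (norm_nonneg c)]

lemma Kd_ne_zero {c : Vd d} (hc : c ∈ Kd Ω) : c ≠ 0 := by
  intro h0
  have := hc.2
  rw [h0, Metric.mem_sphere, dist_zero_right] at this
  simp at this

/-- lift scaling for a point of projective space -/
lemma exists_lift_scale {x : CP d} {v : ↥(nzS d)} (h : mkP v = x) :
    ∃ s : ℝ, 0 < s ∧ ∀ c : Vd d,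
      ‖c ⬝ᵥ x.rep‖ = s * ‖c ⬝ᵥ v.1‖ := by
  obtain ⟨a, ha⟩ := exists_unit_rep (V := Vd d) v.2
  rw [mkP_eq_mk] at h
  rw [h] at ha
  refine ⟨‖(a : ℂ)‖, by simp [a.ne_zero], ?_⟩
  intro c
  rw [ha, dotProduct_smul, smul_eq_mul, norm_mul]

/-- translation from `dualSet` data to `Kd` data -/
lemma dualSet_to_Kd {f : DualP d} (hf : f ∈ dualSet Ω) :
    ∃ c ∈ Kd Ω, ∃ t : ℝ, 0 < t ∧ ∀ v : Vd d,
      ‖c ⬝ᵥ v‖ = t * ‖f.rep v‖ := by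
  set c₀ := vecOf f.rep with hc₀
  have hc₀0 : c₀ ≠ 0 := vecOf_ne_zero (Projectivization.rep_nonzero f)
  have hdot : ∀ v, f.rep v = c₀ ⬝ᵥ v := fun v => apply_eq_dot f.rep v
  have hc₀Du : c₀ ∈ Du Ω := by
    intro v hv
    rw [← hdot]
    intro h0
    have hne := hf (mkP v) hv
    obtain ⟨a, ha⟩ := exists_unit_rep (V := Vd d) v.2
    apply hne
    show (Projectivization.rep f) (Projectivization.mk ℂ v.1 v.2).rep = 0
    rw [ha, LinearMap.map_smul, h0, smul_zero]
  obtain ⟨c, hcK, t, ht, habs⟩ := exists_Kd_of_Du Ω hc₀Du hc₀0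
  refine ⟨c, hcK, t, ht, fun v => ?_⟩
  rw [habs v, hdot v]

/-- translation from `Kd` data to `dualSet` data -/
lemma Kd_to_dualSet {c : Vd d} (hc : c ∈ Kd Ω) :
    ∃ f ∈ dualSet Ω, ∃ t : ℝ, 0 < t ∧ ∀ v : Vd d,
      ‖f.rep v‖ = t * ‖c ⬝ᵥ v‖ := by
  have hc0 : c ≠ 0 := Kd_ne_zero Ω hc
  have htl : toL c ≠ 0 := by
    intro h0
    obtain ⟨i, hi⟩ := Function.ne_iff.mp hc0
    apply hi
    have := congrArg (fun g : Module.Dual ℂ (Vd d) => g (Pi.single i 1)) h0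
    simpa [dotProduct_single] using this
  set f : DualP d := Projectivization.mk ℂ (toL c) htl with hfdef
  obtain ⟨a, ha⟩ := exists_unit_rep (V := Module.Dual ℂ (Vd d)) htl
  have hrep : ∀ v : Vd d, f.rep v = (a : ℂ) * (c ⬝ᵥ v) := by
    intro v
    rw [hfdef, ha]
    simp
  refine ⟨f, ?_, ‖(a : ℂ)‖, by simp [a.ne_zero], fun v => by
    rw [hrep, norm_mul]⟩
  intro x hx
  rw [hrep]
  apply mul_ne_zero (by simpa using a.ne_zero)
  exact Du_dot_ne_zero Ω hc.1 hx

/-- the lifted Hilbert cross-ratio set -/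
def Rset (v w : Vd d) : Set ℝ :=
  {r : ℝ | ∃ c₁ ∈ Kd Ω, ∃ c₂ ∈ Kd Ω,
    r = Real.log ((‖c₁ ⬝ᵥ v‖ * ‖c₂ ⬝ᵥ w‖) /
        (‖c₁ ⬝ᵥ w‖ * ‖c₂ ⬝ᵥ v‖))}

def Hd (v w : Vd d) : ℝ := sSup (Rset Ω v w)

private lemma ratio_cancel {t₁ t₂ s₁ s₂ X1 X2 Y1 Y2 : ℝ}
    (ht₁ : 0 < t₁) (ht₂ : 0 < t₂) (hs₁ : 0 < s₁) (hs₂ : 0 < s₂) :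
    (t₁ * (s₁ * X1) * (t₂ * (s₂ * Y2))) / (t₁ * (s₂ * X2) * (t₂ * (s₁ * Y1)))
      = (X1 * Y2) / (X2 * Y1) := by
  have h1 : t₁ * (s₁ * X1) * (t₂ * (s₂ * Y2)) = (t₁ * t₂ * s₁ * s₂) * (X1 * Y2) := by ring
  have h2 : t₁ * (s₂ * X2) * (t₂ * (s₁ * Y1)) = (t₁ * t₂ * s₁ * s₂) * (X2 * Y1) := by ring
  rw [h1, h2]
  exact mul_div_mul_left _ _ (by positivity)

lemma hilbertSet_eq {v w : CP d} (hv : v ∈ Ω) (hw : w ∈ Ω)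
    (vh wh : ↥(nzS d)) (hvh : mkP vh = v) (hwh : mkP wh = w) :
    {r : ℝ | ∃ f ∈ dualSet Ω, ∃ g ∈ dualSet Ω,
      r = Real.log ((‖f.rep v.rep‖ * ‖g.rep w.rep‖) /
        (‖f.rep w.rep‖ * ‖g.rep v.rep‖))} = Rset Ω vh.1 wh.1 := by
  obtain ⟨s₁, hs₁, hv_scale⟩ := exists_lift_scale hvh
  obtain ⟨s₂, hs₂, hw_scale⟩ := exists_lift_scale hwh
  ext r
  simp only [Set.mem_setOf_eq, Rset]
  constructor
  · rintro ⟨f, hf, g, hg, rfl⟩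
    obtain ⟨c₁, hc₁, t₁, ht₁, hf_scale⟩ := dualSet_to_Kd Ω hf
    obtain ⟨c₂, hc₂, t₂, ht₂, hg_scale⟩ := dualSet_to_Kd Ω hg
    refine ⟨c₁, hc₁, c₂, hc₂, ?_⟩
    have eX1 : ‖f.rep v.rep‖ = 1/t₁ * (s₁ * ‖c₁ ⬝ᵥ vh.1‖) := by
      rw [← hv_scale c₁, hf_scale v.rep, one_div, inv_mul_cancel_left₀ ht₁.ne']
    have eY2 : ‖g.rep w.rep‖ = 1/t₂ * (s₂ * ‖c₂ ⬝ᵥ wh.1‖) := by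
      rw [← hw_scale c₂, hg_scale w.rep, one_div, inv_mul_cancel_left₀ ht₂.ne']
    have eX2 : ‖f.rep w.rep‖ = 1/t₁ * (s₂ * ‖c₁ ⬝ᵥ wh.1‖) := by
      rw [← hw_scale c₁, hf_scale w.rep, one_div, inv_mul_cancel_left₀ ht₁.ne']
    have eY1 : ‖g.rep v.rep‖ = 1/t₂ * (s₁ * ‖c₂ ⬝ᵥ vh.1‖) := by
      rw [← hv_scale c₂, hg_scale v.rep, one_div, inv_mul_cancel_left₀ ht₂.ne']
    rw [eX1, eY2, eX2, eY1]
    congr 1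
    exact ratio_cancel (by positivity) (by positivity) hs₁ hs₂
  · rintro ⟨c₁, hc₁, c₂, hc₂, rfl⟩
    obtain ⟨f, hf, t₁, ht₁, hf_scale⟩ := Kd_to_dualSet Ω hc₁
    obtain ⟨g, hg, t₂, ht₂, hg_scale⟩ := Kd_to_dualSet Ω hc₂
    refine ⟨f, hf, g, hg, ?_⟩
    have eX1 : ‖f.rep v.rep‖ = t₁ * (s₁ * ‖c₁ ⬝ᵥ vh.1‖) := by
      rw [hf_scale v.rep, hv_scale c₁]
    have eY2 : ‖g.rep w.rep‖ = t₂ * (s₂ * ‖c₂ ⬝ᵥ wh.1‖) := by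
      rw [hg_scale w.rep, hw_scale c₂]
    have eX2 : ‖f.rep w.rep‖ = t₁ * (s₂ * ‖c₁ ⬝ᵥ wh.1‖) := by
      rw [hf_scale w.rep, hw_scale c₁]
    have eY1 : ‖g.rep v.rep‖ = t₂ * (s₁ * ‖c₂ ⬝ᵥ vh.1‖) := by
      rw [hg_scale v.rep, hv_scale c₂]
    rw [eX1, eY2, eX2, eY1]
    congr 1
    exact (ratio_cancel ht₁ ht₂ hs₁ hs₂).symm

lemma hilbertDist_eq {v w : CP d} (hv : v ∈ Ω) (hw : w ∈ Ω)
    (vh wh : ↥(nzS d)) (hvh : mkP vh = v) (hwh : mkP wh = w) :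
    hilbertDist Ω v w = Hd Ω vh.1 wh.1 := by
  rw [hilbertDist, Hd, hilbertSet_eq Ω hv hw vh wh hvh hwh]

lemma hilbertDist_self (x : CP d) : hilbertDist Ω x x = 0 := by
  rw [hilbertDist]
  have hsub : {r : ℝ | ∃ f ∈ dualSet Ω, ∃ g ∈ dualSet Ω,
      r = Real.log ((‖f.rep x.rep‖ * ‖g.rep x.rep‖) /
        (‖f.rep x.rep‖ * ‖g.rep x.rep‖))} ⊆ {0} := by
    rintro r ⟨f, _, g, _, rfl⟩
    rcases eq_or_ne (‖f.rep x.rep‖ * ‖g.rep x.rep‖) 0 with h | h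
    · simp [h]
    · simp [div_self h]
  rcases Set.subset_singleton_iff_eq.mp hsub with h | h
  · rw [h]; exact Real.sSup_empty
  · rw [h]; exact csSup_singleton 0

end Dual

section Cont
open Matrix

variable {d : ℕ} (Ω : Set (CP d))

/-- lifted domain -/
def Oh : Set (Vd d) := {v | ∃ h : v ≠ 0, mkP ⟨v, h⟩ ∈ Ω}

lemma Oh_ne_zero {v : Vd d} (hv : v ∈ Oh Ω) : v ≠ 0 := hv.1

lemma mem_Oh_iff {v : ↥(nzS d)} : v.1 ∈ Oh Ω ↔ mkP v ∈ Ω := by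
  constructor
  · rintro ⟨h, hm⟩; convert hm using 2
  · intro h; exact ⟨v.2, by convert h using 2⟩

lemma rep_mem_Oh {x : CP d} (hx : x ∈ Ω) : x.rep ∈ Oh Ω :=
  ⟨Projectivization.rep_nonzero x, by
    show Projectivization.mk ℂ x.rep (Projectivization.rep_nonzero x) ∈ Ω
    rw [Projectivization.mk_rep]; exact hx⟩

lemma isOpen_Oh (hΩ : IsOpen Ω) : IsOpen (Oh Ω) := by
  have : Oh Ω = Subtype.val '' (mkP ⁻¹' Ω : Set ↥(nzS d)) := by
    ext v
    simp only [Set.mem_image, Set.mem_preimage]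
    constructor
    · rintro ⟨h, hm⟩; exact ⟨⟨v, h⟩, hm, rfl⟩
    · rintro ⟨u, hu, rfl⟩; exact ⟨u.2, by convert hu using 2⟩
  rw [this]
  have hop : IsOpen (nzS d) := isOpen_compl_singleton
  exact hop.isOpenMap_subtype_val _ (hΩ.preimage continuous_mkP)

lemma Du_dot_ne_zero' {c : Vd d} (hc : c ∈ Du Ω) {v : Vd d} (hv : v ∈ Oh Ω) :
    c ⬝ᵥ v ≠ 0 := by
  obtain ⟨h, hm⟩ := hv
  exact hc ⟨v, h⟩ hm

lemma isCompact_Kd (hΩ : IsOpen Ω) : IsCompact (Kd Ω) := by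
  refine IsCompact.of_isClosed_subset (isCompact_sphere 0 1) ?_ Set.inter_subset_right
  rw [← isOpen_compl_iff]
  rw [isOpen_iff_forall_mem_open]
  intro c hc
  by_cases hcs : c ∈ Metric.sphere (0 : Vd d) 1
  · have hc0 : c ≠ 0 := by
      intro h0
      rw [h0, Metric.mem_sphere, dist_zero_right] at hcs
      simp at hcs
    have hcd : c ∉ Du Ω := fun h => hc ⟨h, hcs⟩
    have hex : ∃ v : ↥(nzS d), mkP v ∈ Ω ∧ c ⬝ᵥ v.1 = 0 := by
      by_contra h
      push_neg at h
      exact hcd (fun v hv => h v hv)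
    obtain ⟨v, hvΩ, hcv⟩ := hex
    obtain ⟨i, hi⟩ := Function.ne_iff.mp hc0
    set u : Vd d := Pi.single i 1 with hu
    set g : Vd d → Vd d := fun c' => v.1 - ((c' ⬝ᵥ v.1) / (c' ⬝ᵥ u)) • u with hg
    have hA : IsOpen {c' : Vd d | c' ⬝ᵥ u ≠ 0} := by
      have : Continuous fun c' : Vd d => c' ⬝ᵥ u := by
        unfold dotProduct
        exact continuous_finset_sum _ fun j _ => (continuous_apply j).mul continuous_const
      exact isOpen_compl_singleton.preimage this
    have hgc : ContinuousOn g {c' : Vd d | c' ⬝ᵥ u ≠ 0} := by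
      apply ContinuousOn.sub continuousOn_const
      apply ContinuousOn.smul (f := fun c' => c' ⬝ᵥ ↑v / c' ⬝ᵥ u) (g := fun _ => u) _ continuousOn_const
      apply ContinuousOn.div
      · apply Continuous.continuousOn
        unfold dotProduct
        exact continuous_finset_sum _ fun j _ => (continuous_apply j).mul continuous_const
      · apply Continuous.continuousOn
        unfold dotProduct
        exact continuous_finset_sum _ fun j _ => (continuous_apply j).mul continuous_const
      · exact fun c' hc' => hc'
    refine ⟨{c' : Vd d | c' ⬝ᵥ u ≠ 0} ∩ g ⁻¹' (Oh Ω), ?_, ?_, ?_, ?_⟩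
    · -- subset of complement
      rintro c' ⟨hcu, hgO⟩
      intro hmem
      have hDu : c' ∈ Du Ω := hmem.1
      have := Du_dot_ne_zero' Ω hDu hgO
      apply this
      rw [hg]
      simp only
      rw [dotProduct_sub, dotProduct_smul, smul_eq_mul, div_mul_cancel₀ _ hcu, sub_self]
    · exact (continuousOn_open_iff hA).mp hgc _ (isOpen_Oh Ω hΩ)
    · show c ⬝ᵥ u ≠ 0
      rw [hu, dotProduct_single, mul_one]
      simpa using hi
    · show g c ∈ Oh Ω
      have : g c = v.1 := by
        rw [hg]
        simp only [hcv, zero_div, zero_smul, sub_zero]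
      rw [this]
      exact (mem_Oh_iff Ω).mpr hvΩ
  · exact ⟨(Metric.sphere (0 : Vd d) 1)ᶜ, fun c' hc' hmem => hc' hmem.2,
      (Metric.isClosed_sphere).isOpen_compl, hcs⟩

end Cont

section ParamSup

/-- continuity of a parametrized supremum over a compact family -/
lemma continuousOn_sSup_param {E F : Type*} [MetricSpace E] [ProperSpace E] [MetricSpace F]
    {O : Set E} (hO : IsOpen O) {K : Set F} (hK : IsCompact K) (hKne : K.Nonempty)
    {f : E × F → ℝ} (hf : ContinuousOn f (O ×ˢ K)) :
    ContinuousOn (fun x => sSup ((fun y => f (x, y)) '' K)) O := by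
  have himg : ∀ x ∈ O, ContinuousOn (fun y => f (x, y)) K := by
    intro x hx
    exact hf.comp (Continuous.continuousOn (Continuous.prodMk_right x))
      (fun y hy => Set.mk_mem_prod hx hy)
  have hbdd : ∀ x ∈ O, BddAbove ((fun y => f (x, y)) '' K) := fun x hx =>
    (hK.image_of_continuousOn (himg x hx)).bddAbove
  have hne : ∀ x : E, ((fun y => f (x, y)) '' K).Nonempty := fun x => hKne.image _
  intro x₀ hx₀
  rw [Metric.continuousWithinAt_iff]
  intro ε hε
  obtain ⟨r, hr, hball⟩ := Metric.isOpen_iff.mp hO x₀ hx₀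
  set C := Metric.closedBall x₀ (r / 2) with hC
  have hCO : C ⊆ O := (Metric.closedBall_subset_ball (by linarith)).trans hball
  have hCc : IsCompact C := isCompact_closedBall _ _
  have hKC : IsCompact (C ×ˢ K) := hCc.prod hK
  have hfu : UniformContinuousOn f (C ×ˢ K) :=
    hKC.uniformContinuousOn_of_continuous (hf.mono (Set.prod_mono hCO subset_rfl))
  rw [Metric.uniformContinuousOn_iff] at hfu
  obtain ⟨δ, hδ, hδf⟩ := hfu (ε / 2) (by linarith)
  refine ⟨min δ (r / 2), lt_min hδ (by linarith), ?_⟩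
  intro x hx hdist
  have hxC : x ∈ C := Metric.mem_closedBall.mpr
    (le_of_lt (lt_of_lt_of_le hdist (min_le_right _ _)))
  have hx₀C : x₀ ∈ C := Metric.mem_closedBall_self (by linarith)
  have key : ∀ y ∈ K, |f (x, y) - f (x₀, y)| ≤ ε / 2 := by
    intro y hy
    rw [← Real.dist_eq]
    apply le_of_lt
    apply hδf (x, y) (Set.mk_mem_prod hxC hy) (x₀, y) (Set.mk_mem_prod hx₀C hy)
    have hd2 : dist ((x, y) : E × F) (x₀, y) = dist x x₀ := by
      rw [Prod.dist_eq, dist_self]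
      exact max_eq_left dist_nonneg
    rw [hd2]
    exact lt_of_lt_of_le hdist (min_le_left _ _)
  have h1 : sSup ((fun y => f (x, y)) '' K) ≤ sSup ((fun y => f (x₀, y)) '' K) + ε / 2 := by
    apply csSup_le (hne x)
    rintro b ⟨y, hy, rfl⟩
    have hk := abs_le.mp (key y hy)
    have hle : f (x, y) ≤ f (x₀, y) + ε / 2 := by linarith [hk.1, hk.2]
    exact hle.trans (add_le_add (le_csSup (hbdd x₀ hx₀) (Set.mem_image_of_mem _ hy)) le_rfl)
  have h2 : sSup ((fun y => f (x₀, y)) '' K) ≤ sSup ((fun y => f (x, y)) '' K) + ε / 2 := by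
    apply csSup_le (hne x₀)
    rintro b ⟨y, hy, rfl⟩
    have hk := abs_le.mp (key y hy)
    have hle : f (x₀, y) ≤ f (x, y) + ε / 2 := by linarith [hk.1, hk.2]
    exact hle.trans (add_le_add (le_csSup (hbdd x hx) (Set.mem_image_of_mem _ hy)) le_rfl)
  rw [Real.dist_eq]
  have : |sSup ((fun y => f (x, y)) '' K) - sSup ((fun y => f (x₀, y)) '' K)| ≤ ε / 2 :=
    abs_sub_le_iff.mpr ⟨by linarith, by linarith⟩
  linarith [this]

end ParamSup

section HdCont
open Matrix

variable {d : ℕ} (Ω : Set (CP d))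

private lemma log_ratio_expand {X1 Y2 X2 Y1 : ℝ} (h1 : X1 ≠ 0) (h2 : Y2 ≠ 0)
    (h3 : X2 ≠ 0) (h4 : Y1 ≠ 0) :
    Real.log ((X1 * Y2) / (X2 * Y1))
      = Real.log X1 + Real.log Y2 - Real.log X2 - Real.log Y1 := by
  rw [Real.log_div (mul_ne_zero h1 h2) (mul_ne_zero h3 h4), Real.log_mul h1 h2,
    Real.log_mul h3 h4]
  ring

def Gfun : (Vd d × Vd d) × (Vd d × Vd d) → ℝ := fun p =>
  Real.log (‖p.2.1 ⬝ᵥ p.1.1‖) + Real.log (‖p.2.2 ⬝ᵥ p.1.2‖)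
    - Real.log (‖p.2.1 ⬝ᵥ p.1.2‖) - Real.log (‖p.2.2 ⬝ᵥ p.1.1‖)

lemma Rset_eq_image {v w : Vd d} (hv : v ∈ Oh Ω) (hw : w ∈ Oh Ω) :
    Rset Ω v w = (fun c : Vd d × Vd d => Gfun ((v, w), c)) '' (Kd Ω ×ˢ Kd Ω) := by
  ext r
  simp only [Rset, Set.mem_setOf_eq, Set.mem_image, Set.mem_prod]
  constructor
  · rintro ⟨c₁, hc₁, c₂, hc₂, rfl⟩
    refine ⟨(c₁, c₂), ⟨hc₁, hc₂⟩, ?_⟩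
    dsimp only [Gfun]
    exact (log_ratio_expand (norm_ne_zero_iff.mpr (Du_dot_ne_zero' Ω hc₁.1 hv))
      (norm_ne_zero_iff.mpr (Du_dot_ne_zero' Ω hc₂.1 hw))
      (norm_ne_zero_iff.mpr (Du_dot_ne_zero' Ω hc₁.1 hw))
      (norm_ne_zero_iff.mpr (Du_dot_ne_zero' Ω hc₂.1 hv))).symm
  · rintro ⟨⟨c₁, c₂⟩, ⟨hc₁, hc₂⟩, rfl⟩
    refine ⟨c₁, hc₁, c₂, hc₂, ?_⟩
    dsimp only [Gfun]
    exact (log_ratio_expand (norm_ne_zero_iff.mpr (Du_dot_ne_zero' Ω hc₁.1 hv))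
      (norm_ne_zero_iff.mpr (Du_dot_ne_zero' Ω hc₂.1 hw))
      (norm_ne_zero_iff.mpr (Du_dot_ne_zero' Ω hc₁.1 hw))
      (norm_ne_zero_iff.mpr (Du_dot_ne_zero' Ω hc₂.1 hv))).symm

private lemma contOn_logabs_dot {X : Type*} [TopologicalSpace X] {f g : X → Vd d}
    (hf : Continuous f) (hg : Continuous g) {s : Set X}
    (h : ∀ p ∈ s, f p ⬝ᵥ g p ≠ 0) :
    ContinuousOn (fun p => Real.log (‖f p ⬝ᵥ g p‖)) s := by
  have hdotc : Continuous (fun p => ‖f p ⬝ᵥ g p‖) := by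
    apply continuous_norm.comp
    unfold dotProduct
    exact continuous_finset_sum _ fun j _ =>
      ((continuous_apply j).comp hf).mul ((continuous_apply j).comp hg)
  apply ContinuousOn.comp Real.continuousOn_log hdotc.continuousOn
  intro p hp
  simpa using norm_ne_zero_iff.mpr (h p hp)

lemma continuousOn_Gfun :
    ContinuousOn (Gfun (d := d)) ((Oh Ω ×ˢ Oh Ω) ×ˢ (Kd Ω ×ˢ Kd Ω)) := by
  have c11 : Continuous fun p : (Vd d × Vd d) × (Vd d × Vd d) => p.1.1 :=
    continuous_fst.comp continuous_fst
  have c12 : Continuous fun p : (Vd d × Vd d) × (Vd d × Vd d) => p.1.2 :=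
    continuous_snd.comp continuous_fst
  have c21 : Continuous fun p : (Vd d × Vd d) × (Vd d × Vd d) => p.2.1 :=
    continuous_fst.comp continuous_snd
  have c22 : Continuous fun p : (Vd d × Vd d) × (Vd d × Vd d) => p.2.2 :=
    continuous_snd.comp continuous_snd
  have t1 := contOn_logabs_dot c21 c11
    (s := (Oh Ω ×ˢ Oh Ω) ×ˢ (Kd Ω ×ˢ Kd Ω))
    (fun p hp => Du_dot_ne_zero' Ω hp.2.1.1 hp.1.1)
  have t2 := contOn_logabs_dot c22 c12
    (s := (Oh Ω ×ˢ Oh Ω) ×ˢ (Kd Ω ×ˢ Kd Ω))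
    (fun p hp => Du_dot_ne_zero' Ω hp.2.2.1 hp.1.2)
  have t3 := contOn_logabs_dot c21 c12
    (s := (Oh Ω ×ˢ Oh Ω) ×ˢ (Kd Ω ×ˢ Kd Ω))
    (fun p hp => Du_dot_ne_zero' Ω hp.2.1.1 hp.1.2)
  have t4 := contOn_logabs_dot c22 c11
    (s := (Oh Ω ×ˢ Oh Ω) ×ˢ (Kd Ω ×ˢ Kd Ω))
    (fun p hp => Du_dot_ne_zero' Ω hp.2.2.1 hp.1.1)
  exact ((t1.add t2).sub t3).sub t4

lemma bddAbove_Rset (hΩ : IsOpen Ω) {v w : Vd d} (hv : v ∈ Oh Ω) (hw : w ∈ Oh Ω) :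
    BddAbove (Rset Ω v w) := by
  rw [Rset_eq_image Ω hv hw]
  apply IsCompact.bddAbove
  apply IsCompact.image_of_continuousOn ((isCompact_Kd Ω hΩ).prod (isCompact_Kd Ω hΩ))
  apply (continuousOn_Gfun Ω).comp (Continuous.continuousOn (by continuity))
  intro c hc
  exact Set.mk_mem_prod (Set.mk_mem_prod hv hw) hc

lemma Rset_nonempty (hKne : (Kd Ω).Nonempty) (v w : Vd d) :
    (Rset Ω v w).Nonempty := by
  obtain ⟨c, hc⟩ := hKne
  exact ⟨_, c, hc, c, hc, rfl⟩

lemma continuousOn_Hd (hΩ : IsOpen Ω) (hKne : (Kd Ω).Nonempty) :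
    ContinuousOn (fun x : Vd d × Vd d => Hd Ω x.1 x.2) (Oh Ω ×ˢ Oh Ω) := by
  have h := continuousOn_sSup_param ((isOpen_Oh Ω hΩ).prod (isOpen_Oh Ω hΩ))
    ((isCompact_Kd Ω hΩ).prod (isCompact_Kd Ω hΩ)) (hKne.prod hKne)
    (continuousOn_Gfun Ω)
  apply h.congr
  intro x hx
  dsimp only
  rw [show (Hd Ω x.1 x.2) = sSup (Rset Ω x.1 x.2) from rfl,
    Rset_eq_image Ω hx.1 hx.2, Prod.mk.eta]

end HdCont

section Geom
open Matrix

variable {d : ℕ} {Ω : Set (CP d)}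

/-- from linear convexity: a dual vector vanishing at any point outside Ω -/
lemma exists_dual_at (hlc : LinearlyConvex Ω) {q : CP d} (hq : q ∉ Ω) :
    ∃ c : Vd d, c ≠ 0 ∧ c ∈ Du Ω ∧ c ⬝ᵥ q.rep = 0 := by
  obtain ⟨H, ⟨W, hWrank, rfl⟩, hqH, hHΩ⟩ := hlc q ⟨Set.mem_univ _, hq⟩
  have hfin : Module.finrank ℂ (Vd d) = d + 1 := by
    rw [Module.finrank_pi]
    simp
  have hWne : W ≠ ⊤ := by
    intro h
    rw [h, finrank_top] at hWrank
    rw [hfin] at hWrank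
    omega
  obtain ⟨x, hx⟩ : ∃ x : Vd d, x ∉ W := by
    by_contra h
    push_neg at h
    exact hWne (Submodule.eq_top_iff'.mpr h)
  have hπx : (W.mkQ x) ≠ 0 := by
    intro h0
    exact hx ((Submodule.Quotient.mk_eq_zero W).mp h0)
  obtain ⟨φ, hφ⟩ : ∃ φ : Module.Dual ℂ (Vd d ⧸ W), φ (W.mkQ x) ≠ 0 := by
    by_contra h
    push_neg at h
    exact hπx ((Module.forall_dual_apply_eq_zero_iff ℂ _).mp h)
  set f : Module.Dual ℂ (Vd d) := φ.comp W.mkQ with hf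
  have hfx : f x ≠ 0 := hφ
  have hWker : W ≤ LinearMap.ker f := by
    intro y hy
    simp only [hf, LinearMap.mem_ker, LinearMap.comp_apply]
    rw [show W.mkQ y = 0 from (Submodule.Quotient.mk_eq_zero W).mpr hy, map_zero]
  have hrange : LinearMap.range f = ⊤ := by
    rw [Submodule.eq_top_iff']
    intro z
    exact ⟨(z / f x) • x, by rw [LinearMap.map_smul, smul_eq_mul, div_mul_cancel₀ _ hfx]⟩
  have hker : Module.finrank ℂ (LinearMap.ker f) = d := by
    have h1 := LinearMap.finrank_range_add_finrank_ker f
    rw [hrange, hfin] at h1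
    have h2 : Module.finrank ℂ (⊤ : Submodule ℂ ℂ) = 1 := by
      rw [finrank_top, Module.finrank_self]
    omega
  have hWeq : W = LinearMap.ker f :=
    Submodule.eq_of_le_of_finrank_eq hWker (by rw [hWrank, hker])
  refine ⟨vecOf f, vecOf_ne_zero (fun h0 => hfx (by rw [h0]; simp)), ?_, ?_⟩
  · intro v hv
    rw [← apply_eq_dot]
    intro h0
    have hvW : v.1 ∈ W := hWeq ▸ LinearMap.mem_ker.mpr h0
    have : mkP v ∈ projSet W := by
      show (mkP v).submodule ≤ W
      rw [mkP_eq_mk, Projectivization.submodule_eq]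
      obtain ⟨a, ha⟩ := exists_unit_rep (V := Vd d) v.2
      rw [Submodule.span_le, Set.singleton_subset_iff]
      rw [ha]
      exact W.smul_mem _ hvW
    have : mkP v ∈ projSet W ∩ Ω := ⟨this, hv⟩
    rw [hHΩ] at this
    exact this
  · rw [← apply_eq_dot]
    have hrep : q.rep ∈ W := by
      have h1 : q.submodule ≤ W := hqH
      have h2 : q.rep ∈ q.submodule := by
        rw [Projectivization.submodule_eq]
        exact Submodule.mem_span_singleton_self _
      exact h1 h2
    rw [hWeq] at hrep
    exact hrep

lemma indep_of_ne {x y : CP d} (h : x ≠ y) :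
    LinearIndependent ℂ ![x.rep, y.rep] := by
  rw [LinearIndependent.pair_iff]
  intro s t hst
  by_cases hs : s = 0
  · subst hs
    rw [zero_smul, zero_add] at hst
    refine ⟨rfl, ?_⟩
    by_contra ht
    exact Projectivization.rep_nonzero y (by
      have := congrArg (fun v => t⁻¹ • v) hst
      simpa [smul_smul, inv_mul_cancel₀ ht] using this)
  · exfalso
    have ht : t ≠ 0 := by
      intro ht
      subst ht
      rw [zero_smul, add_zero] at hst
      exact Projectivization.rep_nonzero x (by
        have := congrArg (fun v => s⁻¹ • v) hst
        simpa [smul_smul, inv_mul_cancel₀ hs] using this)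
    apply h
    have hxy : x.rep = (-t/s) • y.rep := by
      have := congrArg (fun v => s⁻¹ • v) hst
      simp only [smul_add, smul_smul, smul_zero] at this
      rw [inv_mul_cancel₀ hs, one_smul] at this
      have h2 : x.rep + (s⁻¹ * t) • y.rep = 0 := this
      have : x.rep = -((s⁻¹ * t) • y.rep) := by linear_combination (norm := module) h2
      rw [this, ← neg_smul]
      congr 1
      field_simp
    calc x = Projectivization.mk ℂ x.rep (Projectivization.rep_nonzero x) :=
        (Projectivization.mk_rep x).symm
      _ = Projectivization.mk ℂ y.rep (Projectivization.rep_nonzero y) := by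
        rw [Projectivization.mk_eq_mk_iff]
        refine ⟨Units.mk0 (-t/s) (div_ne_zero (neg_ne_zero.mpr ht) hs), ?_⟩
        rw [hxy]
        rfl
      _ = y := Projectivization.mk_rep y

/-- the projective line through two distinct points -/
lemma line_of_ne {x y : CP d} (h : x ≠ y) :
    IsProjLine (projSet (Submodule.span ℂ {x.rep, y.rep})) := by
  refine ⟨Submodule.span ℂ {x.rep, y.rep}, ?_, rfl⟩
  have hind := indep_of_ne h
  have hr : Set.range ![x.rep, y.rep] = {x.rep, y.rep} := by
    simp [Matrix.range_cons, Matrix.range_empty, Set.pair_comm]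
  rw [← hr]
  rw [finrank_span_eq_card hind]
  simp

lemma mem_line_pair {x y : CP d} {r : CP d}
    (hr : r ∈ projSet (Submodule.span ℂ {x.rep, y.rep})) :
    ∃ a b : ℂ, a • x.rep + b • y.rep = r.rep := by
  have h1 : r.submodule ≤ Submodule.span ℂ {x.rep, y.rep} := hr
  have h2 : r.rep ∈ r.submodule := by
    rw [Projectivization.submodule_eq]
    exact Submodule.mem_span_singleton_self _
  exact Submodule.mem_span_pair.mp (h1 h2)

end Geom

section Geom2
open Matrix

variable {d : ℕ} {Ω : Set (CP d)}

lemma mk_congr {V : Type*} [AddCommGroup V] [Module ℂ V] {v w : V} (hv : v ≠ 0)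
    (h : v = w) : Projectivization.mk ℂ v hv = Projectivization.mk ℂ w (h ▸ hv) := by
  subst h; rfl

lemma mkP_rep (x : CP d) : mkP ⟨x.rep, Projectivization.rep_nonzero x⟩ = x := by
  rw [mkP_eq_mk]; exact Projectivization.mk_rep x

lemma exists_dual_nonzero_at (hlc : LinearlyConvex Ω) (hproper : IsProperDomain Ω)
    {p q : CP d} (hp : p ∈ Ω) (hq : q ∉ Ω) :
    ∃ c : Vd d, c ≠ 0 ∧ c ∈ Du Ω ∧ c ⬝ᵥ q.rep ≠ 0 := by
  have hne : q ≠ p := fun h => hq (h ▸ hp)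
  by_cases hqc : q ∈ closure Ω
  · obtain ⟨r, hrL, hrc⟩ := Set.not_subset.mp (hproper _ (line_of_ne hne))
    obtain ⟨a, b, hab⟩ := mem_line_pair hrL
    obtain ⟨c, hc0, hcDu, hcr⟩ := exists_dual_at hlc (fun h => hrc (subset_closure h))
    refine ⟨c, hc0, hcDu, ?_⟩
    intro hcq
    have hcp : c ⬝ᵥ p.rep ≠ 0 := Du_dot_ne_zero Ω hcDu hp
    have hb : b = 0 := by
      have h1 : c ⬝ᵥ (a • q.rep + b • p.rep) = 0 := by rw [hab]; exact hcr
      rw [dotProduct_add, dotProduct_smul, dotProduct_smul, hcq, smul_zero, zero_add,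
        smul_eq_mul] at h1
      exact (mul_eq_zero.mp h1).resolve_right hcp
    have ha : a ≠ 0 := by
      intro ha
      apply Projectivization.rep_nonzero r
      rw [← hab, ha, hb, zero_smul, zero_smul, add_zero]
    have hrq : r = q := by
      calc r = Projectivization.mk ℂ r.rep (Projectivization.rep_nonzero r) :=
          (Projectivization.mk_rep r).symm
        _ = Projectivization.mk ℂ q.rep (Projectivization.rep_nonzero q) := by
            rw [Projectivization.mk_eq_mk_iff]
            refine ⟨Units.mk0 a ha, ?_⟩
            rw [← hab, hb, zero_smul, add_zero]
            rfl
        _ = q := Projectivization.mk_rep q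
    exact hrc (hrq ▸ hqc)
  · have hnz : ∀ z : ℂ, q.rep + z • p.rep ≠ 0 := by
      intro z h0
      have hind := indep_of_ne hne
      rw [LinearIndependent.pair_iff] at hind
      simpa using (hind 1 z (by rw [one_smul]; exact h0)).1
    have hcont : Continuous (fun z : ℂ => mkP ⟨q.rep + z • p.rep, hnz z⟩) := by
      apply continuous_mkP.comp
      apply Continuous.subtype_mk
      exact continuous_const.add (continuous_id.smul continuous_const)
    have hmem : (0 : ℂ) ∈ (fun z : ℂ => mkP ⟨q.rep + z • p.rep, hnz z⟩) ⁻¹' (closure Ω)ᶜ := by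
      simp only [Set.mem_preimage, Set.mem_compl_iff]
      have h0 : mkP ⟨q.rep + (0 : ℂ) • p.rep, hnz 0⟩ = q := by
        rw [mkP_eq_mk]
        rw [mk_congr (hnz 0) (by rw [zero_smul, add_zero] :
          q.rep + (0 : ℂ) • p.rep = q.rep)]
        exact Projectivization.mk_rep q
      rw [h0]
      exact hqc
    obtain ⟨δ, hδ, hball⟩ := Metric.isOpen_iff.mp
      ((isClosed_closure.isOpen_compl).preimage hcont) 0 hmem
    set z₀ : ℂ := ((δ / 2 : ℝ) : ℂ) with hz₀def
    have hz₀mem : z₀ ∈ Metric.ball (0 : ℂ) δ := by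
      rw [Metric.mem_ball, Complex.dist_eq, sub_zero, hz₀def, Complex.norm_real, Real.norm_eq_abs,
        abs_of_pos (by linarith)]
      linarith
    have hr' := hball hz₀mem
    simp only [Set.mem_preimage, Set.mem_compl_iff] at hr'
    obtain ⟨c, hc0, hcDu, hcr⟩ := exists_dual_at hlc (fun h => hr' (subset_closure h))
    have hlift : c ⬝ᵥ (q.rep + z₀ • p.rep) = 0 := by
      obtain ⟨u, hu⟩ := exists_unit_rep (V := Vd d) (hnz z₀)
      rw [mkP_eq_mk] at hcr
      rw [hu, dotProduct_smul, smul_eq_mul] at hcr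
      exact (mul_eq_zero.mp hcr).resolve_left u.ne_zero
    refine ⟨c, hc0, hcDu, ?_⟩
    intro hcq
    rw [dotProduct_add, hcq, zero_add, dotProduct_smul, smul_eq_mul] at hlift
    have hz : z₀ ≠ 0 := by
      rw [hz₀def]
      simp only [ne_eq, Complex.ofReal_eq_zero]
      linarith
    exact (Du_dot_ne_zero Ω hcDu hp) ((mul_eq_zero.mp hlift).resolve_left hz)

lemma hilbert_pos (hΩ : IsOpen Ω) (hlc : LinearlyConvex Ω) (hproper : IsProperDomain Ω)
    {p q : CP d} (hp : p ∈ Ω) (hq : q ∈ Ω) (hne : p ≠ q) :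
    0 < hilbertDist Ω p q := by
  have hnz : ∀ z : ℂ, p.rep + z • q.rep ≠ 0 := by
    intro z h0
    have hind := indep_of_ne hne
    rw [LinearIndependent.pair_iff] at hind
    simpa using (hind 1 z (by rw [one_smul]; exact h0)).1
  have hcont : Continuous (fun z : ℂ => mkP ⟨p.rep + z • q.rep, hnz z⟩) := by
    apply continuous_mkP.comp
    apply Continuous.subtype_mk
    exact continuous_const.add (continuous_id.smul continuous_const)
  -- find z₀ ∈ N
  obtain ⟨r, hrL, hrc⟩ := Set.not_subset.mp (hproper _ (line_of_ne hne))
  obtain ⟨a, b, hab⟩ := mem_line_pair hrL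
  have ha : a ≠ 0 := by
    intro ha0
    apply hrc
    have hb : b ≠ 0 := by
      intro hb0
      apply Projectivization.rep_nonzero r
      rw [← hab, ha0, hb0, zero_smul, zero_smul, add_zero]
    have hrq : r = q := by
      calc r = Projectivization.mk ℂ r.rep (Projectivization.rep_nonzero r) :=
          (Projectivization.mk_rep r).symm
        _ = Projectivization.mk ℂ q.rep (Projectivization.rep_nonzero q) := by
            rw [Projectivization.mk_eq_mk_iff]
            refine ⟨Units.mk0 b hb, ?_⟩
            rw [← hab, ha0, zero_smul, zero_add]
            rfl
        _ = q := Projectivization.mk_rep q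
    rw [hrq]
    exact subset_closure hq
  set z₀ : ℂ := b / a with hz₀def
  have hφz₀ : mkP ⟨p.rep + z₀ • q.rep, hnz z₀⟩ = r := by
    rw [mkP_eq_mk]
    calc Projectivization.mk ℂ (p.rep + z₀ • q.rep) (hnz z₀)
        = Projectivization.mk ℂ r.rep (Projectivization.rep_nonzero r) := by
          rw [Projectivization.mk_eq_mk_iff]
          refine ⟨Units.mk0 a⁻¹ (inv_ne_zero ha), ?_⟩
          rw [← hab]
          show a⁻¹ • (a • p.rep + b • q.rep) = p.rep + z₀ • q.rep
          rw [smul_add, smul_smul, smul_smul, inv_mul_cancel₀ ha, one_smul, hz₀def]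
          congr 2
          field_simp
      _ = r := Projectivization.mk_rep r
  have hz₀N : mkP ⟨p.rep + z₀ • q.rep, hnz z₀⟩ ∉ closure Ω := by rw [hφz₀]; exact hrc
  have hz₀ne : z₀ ≠ 0 := by
    intro h0
    apply hz₀N
    apply subset_closure
    have : mkP ⟨p.rep + z₀ • q.rep, hnz z₀⟩ = p := by
      rw [mkP_eq_mk, h0]
      rw [mk_congr (h0 ▸ hnz (0:ℂ)) (by rw [zero_smul, add_zero] :
        p.rep + (0 : ℂ) • q.rep = p.rep)]
      exact Projectivization.mk_rep p
    rw [this]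
    exact hp
  have habs₀ : 0 < ‖z₀‖ := by
    simpa using norm_pos_iff.mpr hz₀ne
  -- open neighbourhood inside N
  have hNopen : IsOpen ((fun z : ℂ => mkP ⟨p.rep + z • q.rep, hnz z⟩) ⁻¹' (closure Ω)ᶜ) :=
    (isClosed_closure.isOpen_compl).preimage hcont
  obtain ⟨δ, hδ, hball⟩ := Metric.isOpen_iff.mp hNopen z₀ (by
    simp only [Set.mem_preimage, Set.mem_compl_iff]; exact hz₀N)
  set ε : ℝ := δ / (2 * ‖z₀‖) with hεdef
  have hε : 0 < ε := by
    rw [hεdef]; positivity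
  set z₁ : ℂ := z₀ * ((1 + ε : ℝ) : ℂ) with hz₁def
  have hz₁mem : z₁ ∈ Metric.ball z₀ δ := by
    rw [Metric.mem_ball, Complex.dist_eq, hz₁def]
    have : z₀ * ((1 + ε : ℝ) : ℂ) - z₀ = z₀ * ((ε : ℝ) : ℂ) := by push_cast; ring
    rw [this, norm_mul, Complex.norm_real, Real.norm_eq_abs, abs_of_pos hε, hεdef]
    rw [show ‖z₀‖ * (δ / (2 * ‖z₀‖)) = δ / 2 by field_simp]
    linarith
  have habs₁ : ‖z₁‖ = ‖z₀‖ * (1 + ε) := by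
    rw [hz₁def, norm_mul, Complex.norm_real, Real.norm_eq_abs, abs_of_pos (by linarith)]
  have hlt : ‖z₀‖ < ‖z₁‖ := by
    rw [habs₁]
    nlinarith
  have hz₁N := hball hz₁mem
  simp only [Set.mem_preimage, Set.mem_compl_iff] at hz₁N
  -- dual vectors
  obtain ⟨c₀, hc₀0, hc₀Du, hc₀r⟩ := exists_dual_at hlc
    (fun h => hz₀N (subset_closure h))
  obtain ⟨c₁, hc₁0, hc₁Du, hc₁r⟩ := exists_dual_at hlc
    (fun h => hz₁N (subset_closure h))
  have hlift : ∀ (c : Vd d) (z : ℂ), c ⬝ᵥ (mkP ⟨p.rep + z • q.rep, hnz z⟩).rep = 0 →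
      c ⬝ᵥ (p.rep + z • q.rep) = 0 := by
    intro c z hc
    obtain ⟨u, hu⟩ := exists_unit_rep (V := Vd d) (hnz z)
    rw [mkP_eq_mk] at hc
    rw [hu, dotProduct_smul, smul_eq_mul] at hc
    exact (mul_eq_zero.mp hc).resolve_left u.ne_zero
  have h₀ := hlift c₀ z₀ hc₀r
  have h₁ := hlift c₁ z₁ hc₁r
  have hq₀ : c₀ ⬝ᵥ q.rep ≠ 0 := by
    intro h
    rw [dotProduct_add, dotProduct_smul, h, smul_zero, add_zero] at h₀
    exact Du_dot_ne_zero Ω hc₀Du hp h₀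
  have hq₁ : c₁ ⬝ᵥ q.rep ≠ 0 := by
    intro h
    rw [dotProduct_add, dotProduct_smul, h, smul_zero, add_zero] at h₁
    exact Du_dot_ne_zero Ω hc₁Du hp h₁
  have habsp₀ : ‖c₀ ⬝ᵥ p.rep‖ = ‖z₀‖ * ‖c₀ ⬝ᵥ q.rep‖ := by
    have : c₀ ⬝ᵥ p.rep = -(z₀ * (c₀ ⬝ᵥ q.rep)) := by
      rw [dotProduct_add, dotProduct_smul, smul_eq_mul] at h₀
      linear_combination h₀
    rw [this, norm_neg, norm_mul]
  have habsp₁ : ‖c₁ ⬝ᵥ p.rep‖ = ‖z₁‖ * ‖c₁ ⬝ᵥ q.rep‖ := by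
    have : c₁ ⬝ᵥ p.rep = -(z₁ * (c₁ ⬝ᵥ q.rep)) := by
      rw [dotProduct_add, dotProduct_smul, smul_eq_mul] at h₁
      linear_combination h₁
    rw [this, norm_neg, norm_mul]
  obtain ⟨c₀', hc₀'K, t₀, ht₀, h₀s⟩ := exists_Kd_of_Du Ω hc₀Du hc₀0
  obtain ⟨c₁', hc₁'K, t₁, ht₁, h₁s⟩ := exists_Kd_of_Du Ω hc₁Du hc₁0
  set A := ‖c₁ ⬝ᵥ q.rep‖ with hA
  set B := ‖c₀ ⬝ᵥ q.rep‖ with hB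
  have hApos : 0 < A := norm_pos_iff.mpr hq₁
  have hBpos : 0 < B := norm_pos_iff.mpr hq₀
  have hrval : Real.log ((‖c₁' ⬝ᵥ p.rep‖ * ‖c₀' ⬝ᵥ q.rep‖) /
      (‖c₁' ⬝ᵥ q.rep‖ * ‖c₀' ⬝ᵥ p.rep‖))
      = Real.log (‖z₁‖ / ‖z₀‖) := by
    congr 1
    rw [h₁s, h₀s, h₁s, h₀s, habsp₀, habsp₁, ← hA, ← hB]
    have hnum : t₁ * (‖z₁‖ * A) * (t₀ * B)
        = (t₁ * t₀ * A * B) * ‖z₁‖ := by ring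
    have hden : t₁ * A * (t₀ * (‖z₀‖ * B))
        = (t₁ * t₀ * A * B) * ‖z₀‖ := by ring
    rw [hnum, hden]
    exact mul_div_mul_left _ _ (by positivity)
  have hmemR : Real.log (‖z₁‖ / ‖z₀‖) ∈ Rset Ω p.rep q.rep := by
    rw [← hrval]
    exact ⟨c₁', hc₁'K, c₀', hc₀'K, rfl⟩
  have hbdd : BddAbove (Rset Ω p.rep q.rep) :=
    bddAbove_Rset Ω hΩ (rep_mem_Oh Ω hp) (rep_mem_Oh Ω hq)
  have hlog : 0 < Real.log (‖z₁‖ / ‖z₀‖) :=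
    Real.log_pos ((one_lt_div habs₀).mpr hlt)
  have heq : hilbertDist Ω p q = Hd Ω p.rep q.rep :=
    hilbertDist_eq Ω hp hq ⟨p.rep, Projectivization.rep_nonzero p⟩
      ⟨q.rep, Projectivization.rep_nonzero q⟩ (mkP_rep p) (mkP_rep q)
  rw [heq]
  exact lt_of_lt_of_le hlog (le_csSup hbdd hmemR)

end Geom2

section Main
open Matrix

variable {d : ℕ} {Ω : Set (CP d)}

lemma isQuotientMap_mkP : Topology.IsQuotientMap (mkP (d := d)) :=
  isQuotientMap_quotient_mk'

lemma psi_mkP (c : Vd d) (v : ↥(nzS d)) :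
    ‖c ⬝ᵥ (mkP v).rep‖ / ‖(mkP v).rep‖ = ‖c ⬝ᵥ v.1‖ / ‖v.1‖ := by
  obtain ⟨a, ha⟩ := exists_unit_rep (V := Vd d) v.2
  rw [mkP_eq_mk, ha, dotProduct_smul, smul_eq_mul, norm_mul, norm_smul]
  exact mul_div_mul_left _ _ (norm_ne_zero_iff.mpr a.ne_zero)

lemma continuous_psi (c : Vd d) :
    Continuous (fun y : CP d => ‖c ⬝ᵥ y.rep‖ / ‖y.rep‖) := by
  rw [isQuotientMap_mkP.continuous_iff]
  have heq : ((fun y : CP d => ‖c ⬝ᵥ y.rep‖ / ‖y.rep‖) ∘ mkP)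
      = fun v : ↥(nzS d) => ‖c ⬝ᵥ v.1‖ / ‖v.1‖ :=
    funext fun v => psi_mkP c v
  rw [heq]
  apply Continuous.div
  · apply continuous_norm.comp
    unfold dotProduct
    exact continuous_finset_sum _ fun j _ =>
      continuous_const.mul ((continuous_apply j).comp continuous_subtype_val)
  · exact continuous_norm.comp continuous_subtype_val
  · exact fun v => norm_ne_zero_iff.mpr v.2

lemma continuousOn_hilbertDist (hΩ : IsOpen Ω) (hKne : (Kd Ω).Nonempty)
    {p : CP d} (hp : p ∈ Ω) :
    ContinuousOn (fun y => hilbertDist Ω p y) Ω := by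
  rw [continuousOn_open_iff hΩ]
  intro t ht
  have h1 : IsOpen (mkP ⁻¹' Ω : Set ↥(nzS d)) := hΩ.preimage continuous_mkP
  have hg : ContinuousOn (fun v : ↥(nzS d) => Hd Ω p.rep v.1) (mkP ⁻¹' Ω) := by
    apply (continuousOn_Hd Ω hΩ hKne).comp
      (Continuous.continuousOn (continuous_const.prodMk continuous_subtype_val))
    intro v hv
    exact Set.mk_mem_prod (rep_mem_Oh Ω hp) ((mem_Oh_iff Ω).mpr hv)
  have hWopen : IsOpen ((mkP ⁻¹' Ω : Set ↥(nzS d)) ∩ (fun v : ↥(nzS d) => Hd Ω p.rep v.1) ⁻¹' t) :=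
    (continuousOn_open_iff h1).mp hg t ht
  have himg : Ω ∩ (fun y => hilbertDist Ω p y) ⁻¹' t
      = mkP '' ((mkP ⁻¹' Ω : Set ↥(nzS d)) ∩ (fun v : ↥(nzS d) => Hd Ω p.rep v.1) ⁻¹' t) := by
    ext y
    constructor
    · rintro ⟨hyΩ, hyt⟩
      refine ⟨⟨y.rep, Projectivization.rep_nonzero y⟩, ⟨?_, ?_⟩, mkP_rep y⟩
      · show mkP _ ∈ Ω
        rw [mkP_rep]
        exact hyΩ
      · show Hd Ω p.rep y.rep ∈ t
        rw [← hilbertDist_eq Ω hp hyΩ ⟨p.rep, Projectivization.rep_nonzero p⟩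
          ⟨y.rep, Projectivization.rep_nonzero y⟩ (mkP_rep p) (mkP_rep y)]
        exact hyt
    · rintro ⟨v, ⟨hvΩ, hvt⟩, rfl⟩
      refine ⟨hvΩ, ?_⟩
      show hilbertDist Ω p (mkP v) ∈ t
      rw [hilbertDist_eq Ω hp hvΩ ⟨p.rep, Projectivization.rep_nonzero p⟩ v (mkP_rep p) rfl]
      exact hvt
  rw [himg]
  exact isOpenMap_mkP _ hWopen

lemma isCompact_hilbertBall (hΩ : IsOpen Ω) (hlc : LinearlyConvex Ω)
    (hproper : IsProperDomain Ω) (hKne : (Kd Ω).Nonempty)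
    {p : CP d} (hp : p ∈ Ω) (R : ℝ) :
    IsCompact {q : CP d | q ∈ Ω ∧ hilbertDist Ω p q ≤ R} := by
  set B := {q : CP d | q ∈ Ω ∧ hilbertDist Ω p q ≤ R} with hB
  refine IsCompact.of_isClosed_subset isCompact_univ_CP ?_ (Set.subset_univ _)
  apply isClosed_of_closure_subset
  intro q hqcl
  have hBsub : B ⊆ Ω := fun y hy => hy.1
  have hqΩc : q ∈ closure Ω := closure_mono hBsub hqcl
  by_cases hqΩ : q ∈ Ω
  · refine ⟨hqΩ, ?_⟩
    by_contra hgt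
    push_neg at hgt
    have h1 : IsOpen (mkP ⁻¹' Ω : Set ↥(nzS d)) := hΩ.preimage continuous_mkP
    have hg : ContinuousOn (fun v : ↥(nzS d) => Hd Ω p.rep v.1) (mkP ⁻¹' Ω) := by
      apply (continuousOn_Hd Ω hΩ hKne).comp
        (Continuous.continuousOn (continuous_const.prodMk continuous_subtype_val))
      intro v hv
      exact Set.mk_mem_prod (rep_mem_Oh Ω hp) ((mem_Oh_iff Ω).mpr hv)
    set W : Set ↥(nzS d) := (mkP ⁻¹' Ω) ∩ (fun v : ↥(nzS d) => Hd Ω p.rep v.1) ⁻¹' (Set.Ioi R)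
      with hW
    have hWopen : IsOpen W := (continuousOn_open_iff h1).mp hg _ isOpen_Ioi
    have hqW : q ∈ mkP '' W := by
      refine ⟨⟨q.rep, Projectivization.rep_nonzero q⟩, ⟨?_, ?_⟩, mkP_rep q⟩
      · show mkP _ ∈ Ω
        rw [mkP_rep]
        exact hqΩ
      · show Hd Ω p.rep q.rep ∈ Set.Ioi R
        rw [← hilbertDist_eq Ω hp hqΩ ⟨p.rep, Projectivization.rep_nonzero p⟩
          ⟨q.rep, Projectivization.rep_nonzero q⟩ (mkP_rep p) (mkP_rep q)]
        exact hgt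
    have hdisj : (mkP '' W) ∩ B = ∅ := by
      rw [Set.eq_empty_iff_forall_notMem]
      rintro y ⟨⟨v, ⟨hvΩ, hvt⟩, rfl⟩, hyB⟩
      have : hilbertDist Ω p (mkP v) ∈ Set.Ioi R := by
        rw [hilbertDist_eq Ω hp hvΩ ⟨p.rep, Projectivization.rep_nonzero p⟩ v (mkP_rep p) rfl]
        exact hvt
      exact absurd hyB.2 (not_le.mpr this)
    have := mem_closure_iff.mp hqcl _ (isOpenMap_mkP _ hWopen) hqW
    rw [hdisj] at this
    exact Set.not_nonempty_empty this
  · exfalso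
    obtain ⟨c₁, hc₁0, hc₁Du, hc₁q⟩ := exists_dual_at hlc hqΩ
    obtain ⟨c₂, hc₂0, hc₂Du, hc₂q⟩ := exists_dual_nonzero_at hlc hproper hp hqΩ
    set ψ : CP d → ℝ := fun y => ‖c₁ ⬝ᵥ y.rep‖ / ‖y.rep‖ with hψdef
    set χ : CP d → ℝ := fun y => ‖c₂ ⬝ᵥ y.rep‖ / ‖y.rep‖ with hχdef
    have hψc : Continuous ψ := continuous_psi c₁
    have hχc : Continuous χ := continuous_psi c₂
    have hψp : 0 < ψ p := by
      apply div_pos (norm_pos_iff.mpr (Du_dot_ne_zero Ω hc₁Du hp))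
      exact norm_pos_iff.mpr (Projectivization.rep_nonzero p)
    have hχp : 0 < χ p := by
      apply div_pos (norm_pos_iff.mpr (Du_dot_ne_zero Ω hc₂Du hp))
      exact norm_pos_iff.mpr (Projectivization.rep_nonzero p)
    have hχq : 0 < χ q := by
      apply div_pos (norm_pos_iff.mpr hc₂q)
      exact norm_pos_iff.mpr (Projectivization.rep_nonzero q)
    set c₀ : ℝ := ψ p / (χ p * Real.exp R) with hc₀def
    have hc₀pos : 0 < c₀ := by
      rw [hc₀def]
      positivity
    set O : Set (CP d) := {y | ψ y < c₀ * χ y} with hO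
    have hOopen : IsOpen O := isOpen_lt hψc (continuous_const.mul hχc)
    have hqO : q ∈ O := by
      show ψ q < c₀ * χ q
      have : ψ q = 0 := by
        rw [hψdef]
        simp only
        rw [hc₁q]
        simp
      rw [this]
      positivity
    have hdisj : O ∩ B = ∅ := by
      rw [Set.eq_empty_iff_forall_notMem]
      rintro w ⟨hwO, hwΩ, hwR⟩
      have hψw : 0 < ψ w := by
        apply div_pos (norm_pos_iff.mpr (Du_dot_ne_zero Ω hc₁Du hwΩ))
        exact norm_pos_iff.mpr (Projectivization.rep_nonzero w)
      have hχw : 0 < χ w := by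
        apply div_pos (norm_pos_iff.mpr (Du_dot_ne_zero Ω hc₂Du hwΩ))
        exact norm_pos_iff.mpr (Projectivization.rep_nonzero w)
      obtain ⟨c₁', hc₁'K, t₁, ht₁, h₁s⟩ := exists_Kd_of_Du Ω hc₁Du hc₁0
      obtain ⟨c₂', hc₂'K, t₂, ht₂, h₂s⟩ := exists_Kd_of_Du Ω hc₂Du hc₂0
      have hnp : (0:ℝ) < ‖p.rep‖ := norm_pos_iff.mpr (Projectivization.rep_nonzero p)
      have hnw : (0:ℝ) < ‖w.rep‖ := norm_pos_iff.mpr (Projectivization.rep_nonzero w)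
      have habs1p : ‖c₁ ⬝ᵥ p.rep‖ = ψ p * ‖p.rep‖ :=
        (div_mul_cancel₀ _ hnp.ne').symm
      have habs1w : ‖c₁ ⬝ᵥ w.rep‖ = ψ w * ‖w.rep‖ :=
        (div_mul_cancel₀ _ hnw.ne').symm
      have habs2p : ‖c₂ ⬝ᵥ p.rep‖ = χ p * ‖p.rep‖ :=
        (div_mul_cancel₀ _ hnp.ne').symm
      have habs2w : ‖c₂ ⬝ᵥ w.rep‖ = χ w * ‖w.rep‖ :=
        (div_mul_cancel₀ _ hnw.ne').symm
      have hrval : Real.log ((‖c₁' ⬝ᵥ p.rep‖ * ‖c₂' ⬝ᵥ w.rep‖) /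
          (‖c₁' ⬝ᵥ w.rep‖ * ‖c₂' ⬝ᵥ p.rep‖))
          = Real.log ((ψ p * χ w) / (ψ w * χ p)) := by
        congr 1
        rw [h₁s, h₂s, h₁s, h₂s, habs1p, habs1w, habs2p, habs2w]
        have hnum : t₁ * (ψ p * ‖p.rep‖) * (t₂ * (χ w * ‖w.rep‖))
            = (t₁ * t₂ * ‖p.rep‖ * ‖w.rep‖) * (ψ p * χ w) := by ring
        have hden : t₁ * (ψ w * ‖w.rep‖) * (t₂ * (χ p * ‖p.rep‖))
            = (t₁ * t₂ * ‖p.rep‖ * ‖w.rep‖) * (ψ w * χ p) := by ring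
        rw [hnum, hden]
        exact mul_div_mul_left _ _ (by positivity)
      have hmemR : Real.log ((ψ p * χ w) / (ψ w * χ p)) ∈ Rset Ω p.rep w.rep := by
        rw [← hrval]
        exact ⟨c₁', hc₁'K, c₂', hc₂'K, rfl⟩
      have hbdd : BddAbove (Rset Ω p.rep w.rep) :=
        bddAbove_Rset Ω hΩ (rep_mem_Oh Ω hp) (rep_mem_Oh Ω hwΩ)
      have hle : Real.log ((ψ p * χ w) / (ψ w * χ p)) ≤ R := by
        have := le_csSup hbdd hmemR
        have heq : hilbertDist Ω p w = Hd Ω p.rep w.rep :=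
          hilbertDist_eq Ω hp hwΩ ⟨p.rep, Projectivization.rep_nonzero p⟩
            ⟨w.rep, Projectivization.rep_nonzero w⟩ (mkP_rep p) (mkP_rep w)
        have h2 : sSup (Rset Ω p.rep w.rep) ≤ R := by
          rw [show sSup (Rset Ω p.rep w.rep) = Hd Ω p.rep w.rep from rfl, ← heq]
          exact hwR
        linarith
      have hA : (ψ p * χ w) / (ψ w * χ p) ≤ Real.exp R :=
        (Real.log_le_iff_le_exp (by positivity)).mp hle
      have h5 : ψ p * χ w ≤ Real.exp R * (ψ w * χ p) :=
        (div_le_iff₀ (by positivity)).mp hA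
      have h6 : ψ w * (χ p * Real.exp R) < ψ p * χ w := by
        have hstep := mul_lt_mul_of_pos_right hwO (show (0:ℝ) < χ p * Real.exp R by positivity)
        calc ψ w * (χ p * Real.exp R) < c₀ * χ w * (χ p * Real.exp R) := hstep
          _ = ψ p * χ w := by
            rw [hc₀def]
            field_simp
      have h5' : ψ p * χ w ≤ ψ w * (χ p * Real.exp R) := by
        rw [show ψ w * (χ p * Real.exp R) = Real.exp R * (ψ w * χ p) from by ring]
        exact h5
      linarith [h5', h6]
    have := mem_closure_iff.mp hqcl _ hOopen hqO
    rw [hdisj] at this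
    exact Set.not_nonempty_empty this

end Main


/-- For a proper linearly convex open set, closed Hilbert-metric balls are
compact, and the Hilbert metric induces the subspace topology. -/
theorem statement_3 {d : ℕ} (Ω : Set (CP d)) (hΩopen : IsOpen Ω)
    (hlc : LinearlyConvex Ω) (hproper : IsProperDomain Ω) :
    (∀ p ∈ Ω, ∀ R > 0, IsCompact {q : CP d | q ∈ Ω ∧ hilbertDist Ω p q ≤ R}) ∧
      (∀ (x : Ω) (S : Set Ω),
        S ∈ nhds x ↔ ∃ ε > 0, {q : Ω | hilbertDist Ω x q < ε} ⊆ S) := by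
  classical
  by_cases hsub : ∀ x y : CP d, x = y
  · constructor
    · intro p hp R hR
      exact Set.Subsingleton.isCompact (fun a _ b _ => hsub a b)
    · intro x S
      constructor
      · intro hS
        refine ⟨1, one_pos, ?_⟩
        intro q _
        have hqx : q = x := Subtype.ext (hsub _ _)
        rw [hqx]
        exact mem_of_mem_nhds hS
      · rintro ⟨ε, hε, hball⟩
        have hxS : x ∈ S := hball (by
          show hilbertDist Ω x.1 x.1 < ε
          rw [hilbertDist_self Ω]
          exact hε)
        apply Filter.mem_of_superset Filter.univ_mem
        intro q _
        have hqx : q = x := Subtype.ext (hsub _ _)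
        rw [hqx]
        exact hxS
  · push_neg at hsub
    obtain ⟨x₀, y₀, hxy⟩ := hsub
    have hΩne : Ω ≠ Set.univ := by
      intro h
      apply hproper _ (line_of_ne hxy)
      rw [h, closure_univ]
      exact Set.subset_univ _
    obtain ⟨q₀, hq₀⟩ := (Set.ne_univ_iff_exists_notMem Ω).mp hΩne
    obtain ⟨c, hc0, hcDu, _⟩ := exists_dual_at hlc hq₀
    obtain ⟨c', hc'K, _, _, _⟩ := exists_Kd_of_Du Ω hcDu hc0
    have hKne : (Kd Ω).Nonempty := ⟨c', hc'K⟩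
    constructor
    · intro p hp R _
      exact isCompact_hilbertBall hΩopen hlc hproper hKne hp R
    · intro x S
      constructor
      · intro hS
        rw [mem_nhds_subtype] at hS
        obtain ⟨u, hu, husub⟩ := hS
        obtain ⟨T, hTsub, hTopen, hxT⟩ := mem_nhds_iff.mp hu
        set Ball1 := {q : CP d | q ∈ Ω ∧ hilbertDist Ω x.1 q ≤ 1} with hBall
        have hBallc : IsCompact Ball1 :=
          isCompact_hilbertBall hΩopen hlc hproper hKne x.2 1
        set K' := Ball1 \ T with hK'
        have hK'c : IsCompact K' := hBallc.diff hTopen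
        have hK'Ω : K' ⊆ Ω := fun y hy => hy.1.1
        by_cases hK'ne : K'.Nonempty
        · obtain ⟨q₀', hq₀'K, hmin⟩ := hK'c.exists_isMinOn hK'ne
            ((continuousOn_hilbertDist hΩopen hKne x.2).mono hK'Ω)
          have hq₀Ω : q₀' ∈ Ω := hK'Ω hq₀'K
          have hq₀ne : x.1 ≠ q₀' := by
            intro h
            exact hq₀'K.2 (h ▸ hxT)
          have hm : 0 < hilbertDist Ω x.1 q₀' :=
            hilbert_pos hΩopen hlc hproper x.2 hq₀Ω hq₀ne
          refine ⟨min 1 (hilbertDist Ω x.1 q₀'), lt_min one_pos hm, ?_⟩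
          intro q hq
          simp only [Set.mem_setOf_eq] at hq
          apply husub
          show q.1 ∈ u
          apply hTsub
          have hqBall : q.1 ∈ Ball1 := ⟨q.2, le_of_lt (lt_of_lt_of_le hq (min_le_left _ _))⟩
          by_contra hqT
          have hqK' : q.1 ∈ K' := ⟨hqBall, hqT⟩
          have hge := isMinOn_iff.mp hmin _ hqK'
          have hlt := lt_of_lt_of_le hq (min_le_right _ _)
          linarith
        · refine ⟨1, one_pos, ?_⟩
          intro q hq
          simp only [Set.mem_setOf_eq] at hq
          apply husub
          show q.1 ∈ u
          apply hTsub
          have hqBall : q.1 ∈ Ball1 := ⟨q.2, le_of_lt hq⟩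
          by_contra hqT
          exact hK'ne ⟨q.1, hqBall, hqT⟩
      · rintro ⟨ε, hε, hball⟩
        rw [mem_nhds_subtype]
        have h1 : IsOpen (mkP ⁻¹' Ω : Set ↥(nzS d)) := hΩopen.preimage continuous_mkP
        have hg : ContinuousOn (fun v : ↥(nzS d) => Hd Ω x.1.rep v.1) (mkP ⁻¹' Ω) := by
          apply (continuousOn_Hd Ω hΩopen hKne).comp
            (Continuous.continuousOn (continuous_const.prodMk continuous_subtype_val))
          intro v hv
          exact Set.mk_mem_prod (rep_mem_Oh Ω x.2) ((mem_Oh_iff Ω).mpr hv)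
        set W : Set ↥(nzS d) :=
          (mkP ⁻¹' Ω) ∩ (fun v : ↥(nzS d) => Hd Ω x.1.rep v.1) ⁻¹' (Set.Iio ε) with hW
        have hWopen : IsOpen W := (continuousOn_open_iff h1).mp hg _ isOpen_Iio
        refine ⟨mkP '' W, ?_, ?_⟩
        · apply IsOpen.mem_nhds (isOpenMap_mkP _ hWopen)
          refine ⟨⟨x.1.rep, Projectivization.rep_nonzero x.1⟩, ⟨?_, ?_⟩, mkP_rep x.1⟩
          · show mkP _ ∈ Ω
            rw [mkP_rep]
            exact x.2
          · show Hd Ω x.1.rep x.1.rep ∈ Set.Iio ε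
            rw [← hilbertDist_eq Ω x.2 x.2 ⟨x.1.rep, Projectivization.rep_nonzero x.1⟩
              ⟨x.1.rep, Projectivization.rep_nonzero x.1⟩ (mkP_rep x.1) (mkP_rep x.1)]
            rw [show hilbertDist Ω x.1 x.1 = 0 from hilbertDist_self Ω x.1]
            simpa using hε
        · intro q hq
          obtain ⟨v, ⟨hvΩ, hvt⟩, hveq⟩ := hq
          apply hball
          show hilbertDist Ω x.1 q.1 < ε
          rw [← hveq, hilbertDist_eq Ω x.2 hvΩ ⟨x.1.rep, Projectivization.rep_nonzero x.1⟩
            v (mkP_rep x.1) rfl]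
          exact hvt


end ComplexConvex
end
end

section
/- Suppose Ω ⊆ ℙ(ℂ²) is an open proper ℂ-convex set contained in the affine chart {[1:z] : z ∈ ℂ} and bounded there. Then, identifying Ω with a bounded open subset of ℂ, the Hilbert metric equals the Apollonian metric: for all z₁, z₂ ∈ Ω, d_Ω(z₁,z₂) = max over b₁,b₂ ∈ (ℂ ∪ {∞}) ∖ Ω of log(|z₁−b₁||z₂−b₂| / (|z₂−b₁||z₁−b₂|)), with the convention |z−∞|/|w−∞| = 1. -/
open scoped LinearAlgebra.Projectivization MatrixGroups
open Projectivization

noncomputable section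
namespace ComplexConvex

-- decomposition of a dual functional on ℂ²
lemma dual_decomp (f : Module.Dual ℂ (Vd 1)) (v : Vd 1) :
    f v = v 0 * f (Pi.single 0 1) + v 1 * f (Pi.single 1 1) := by
  have hv : v = v 0 • (Pi.single 0 1 : Vd 1) + v 1 • (Pi.single 1 1 : Vd 1) := by
    funext i; fin_cases i <;> simp
  conv_lhs => rw [hv]
  simp [smul_eq_mul]

lemma dual_classify (Ω : Set (CP 1)) (hchart : ∀ x ∈ Ω, Projectivization.rep x 0 ≠ 0)
    (f : DualP 1) (hf : f ∈ dualSet Ω) :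
    (∃ c : ℝ, 0 < c ∧ ∀ p : CP 1, ‖f.rep p.rep‖ = c * ‖p.rep 0‖) ∨
    (∃ (β : ℂ) (c : ℝ), 0 < c ∧
      β ∉ ((fun z : CP 1 => Projectivization.rep z 1 / Projectivization.rep z 0) '' Ω) ∧
      ∀ p : CP 1, p.rep 0 ≠ 0 →
        ‖f.rep p.rep‖
          = c * ‖p.rep 0‖ * dist (p.rep 1 / p.rep 0) β) := by
  set a := f.rep (Pi.single 0 1) with ha
  set b := f.rep (Pi.single 1 1) with hb
  by_cases hb0 : b = 0
  · left
    have hA : a ≠ 0 := by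
      intro h0
      apply f.rep_nonzero
      apply LinearMap.ext
      intro v
      rw [dual_decomp, ← ha, ← hb, h0, hb0]; simp
    refine ⟨‖a‖, by simpa using hA, fun p => ?_⟩
    rw [dual_decomp, ← ha, ← hb, hb0]
    simp [mul_comm]
  · right
    refine ⟨-(a / b), ‖b‖, by simpa using hb0, ?_, ?_⟩
    · rintro ⟨p, hp, hpe⟩
      apply hf p hp
      have hp0 := hchart p hp
      rw [dual_decomp, ← ha, ← hb]
      have : p.rep 1 = -(a / b) * p.rep 0 := by
        rw [← hpe]; field_simp
      rw [this]; field_simp; try ring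
    · intro p hp0
      rw [dual_decomp, ← ha, ← hb]
      have key : p.rep 0 * a + p.rep 1 * b = (b * p.rep 0) * (p.rep 1 / p.rep 0 - -(a / b)) := by
        field_simp; try ring
      rw [key, Complex.dist_eq, norm_mul, norm_mul]
      try ring

lemma exists_dual_infty (Ω : Set (CP 1)) (hchart : ∀ x ∈ Ω, Projectivization.rep x 0 ≠ 0) :
    ∃ f ∈ dualSet Ω, ∃ c : ℝ, 0 < c ∧
      ∀ p : CP 1, ‖f.rep p.rep‖ = c * ‖p.rep 0‖ := by
  set φ : Module.Dual ℂ (Vd 1) := LinearMap.proj 0 with hφ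
  have hφ0 : φ ≠ 0 := by
    intro h
    have := congrFun (congrArg DFunLike.coe h) (Pi.single 0 1 : Vd 1)
    simp [hφ] at this
  obtain ⟨u, hu⟩ := exists_smul_eq_mk_rep ℂ φ hφ0
  refine ⟨Projectivization.mk ℂ φ hφ0, ?_, ‖(u : ℂ)‖, by simp, ?_⟩
  · intro x hx
    rw [← hu]
    simp only [LinearMap.smul_apply, hφ, LinearMap.proj_apply, Units.smul_def, smul_eq_mul]
    exact mul_ne_zero u.ne_zero (hchart x hx)
  · intro p
    rw [← hu]
    simp [hφ, Units.smul_def]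

lemma exists_dual_pt (Ω : Set (CP 1)) (hchart : ∀ x ∈ Ω, Projectivization.rep x 0 ≠ 0)
    (b : ℂ)
    (hb : b ∉ ((fun z : CP 1 => Projectivization.rep z 1 / Projectivization.rep z 0) '' Ω)) :
    ∃ f ∈ dualSet Ω, ∃ c : ℝ, 0 < c ∧
      ∀ p : CP 1, p.rep 0 ≠ 0 →
        ‖f.rep p.rep‖
          = c * ‖p.rep 0‖ * dist (p.rep 1 / p.rep 0) b := by
  set φ : Module.Dual ℂ (Vd 1) := LinearMap.proj 1 - b • LinearMap.proj 0 with hφ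
  have hφval : ∀ v : Vd 1, φ v = v 1 - b * v 0 := by
    intro v; simp [hφ, smul_eq_mul]
  have hφ0 : φ ≠ 0 := by
    intro h
    have := congrFun (congrArg DFunLike.coe h) (Pi.single 1 1 : Vd 1)
    rw [hφval] at this
    simp at this
  obtain ⟨u, hu⟩ := exists_smul_eq_mk_rep ℂ φ hφ0
  have hval : ∀ p : CP 1, p.rep 0 ≠ 0 →
      (Projectivization.mk ℂ φ hφ0).rep p.rep = (u * p.rep 0) * (p.rep 1 / p.rep 0 - b) := by
    intro p hp0
    rw [← hu]
    simp only [LinearMap.smul_apply, Units.smul_def, smul_eq_mul, hφval]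
    field_simp
    try ring
  refine ⟨Projectivization.mk ℂ φ hφ0, ?_, ‖(u : ℂ)‖, by simp, ?_⟩
  · intro x hx
    rw [hval x (hchart x hx)]
    refine mul_ne_zero (mul_ne_zero u.ne_zero (hchart x hx)) (sub_ne_zero.2 ?_)
    intro h
    exact hb ⟨x, hx, h⟩
  · intro p hp0
    rw [hval p hp0, Complex.dist_eq, norm_mul, norm_mul]
    try ring


/-- For a bounded proper `ℂ`-convex open set in an affine chart of
`ℙ(ℂ²)`, the Hilbert metric coincides with the Apollonian metric. -/
theorem statement_4 (Ω : Set (CP 1)) (hΩopen : IsOpen Ω) (hconv : CConvex Ω)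
    (hproper : IsProperDomain Ω)
    (hchart : ∀ x ∈ Ω, Projectivization.rep x 0 ≠ 0)
    (hbdd : ∃ M : ℝ, ∀ x ∈ Ω,
      ‖Projectivization.rep x 1 / Projectivization.rep x 0‖ ≤ M) :
    ∀ x ∈ Ω, ∀ y ∈ Ω,
      hilbertDist Ω x y =
        apollonianDist
          ((fun z : CP 1 => Projectivization.rep z 1 / Projectivization.rep z 0) '' Ω)
          (Projectivization.rep x 1 / Projectivization.rep x 0)
          (Projectivization.rep y 1 / Projectivization.rep y 0) := by
  intro x hx y hy
  have hx0 := hchart x hx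
  have hy0 := hchart y hy
  have hax : ‖Projectivization.rep x 0‖ ≠ 0 := norm_ne_zero_iff.mpr hx0
  have hay : ‖Projectivization.rep y 0‖ ≠ 0 := norm_ne_zero_iff.mpr hy0
  have hz₁Ω : Projectivization.rep x 1 / Projectivization.rep x 0 ∈
      (fun z : CP 1 => Projectivization.rep z 1 / Projectivization.rep z 0) '' Ω :=
    ⟨x, hx, rfl⟩
  have hz₂Ω : Projectivization.rep y 1 / Projectivization.rep y 0 ∈
      (fun z : CP 1 => Projectivization.rep z 1 / Projectivization.rep z 0) '' Ω :=
    ⟨y, hy, rfl⟩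
  unfold hilbertDist apollonianDist
  congr 1
  ext r
  simp only [Set.mem_union, Set.mem_singleton_iff, Set.mem_setOf_eq, Set.mem_compl_iff]
  constructor
  · rintro ⟨f, hf, g, hg, rfl⟩
    rcases dual_classify Ω hchart f hf with ⟨c₁, hc₁, hF⟩ | ⟨β₁, c₁, hc₁, hβ₁, hF⟩ <;>
      rcases dual_classify Ω hchart g hg with ⟨c₂, hc₂, hG⟩ | ⟨β₂, c₂, hc₂, hβ₂, hG⟩
    · -- both ∞ : value 0
      left; left; left
      rw [hF x, hF y, hG x, hG y]
      rw [show (c₁ * ‖Projectivization.rep x 0‖ *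
          (c₂ * ‖Projectivization.rep y 0‖)) /
          (c₁ * ‖Projectivization.rep y 0‖ *
          (c₂ * ‖Projectivization.rep x 0‖)) = 1 by
        field_simp]
      exact Real.log_one
    · -- f ∞, g at β₂
      left; right
      refine ⟨β₂, hβ₂, ?_⟩
      have hd : dist (Projectivization.rep x 1 / Projectivization.rep x 0) β₂ ≠ 0 :=
        dist_ne_zero.2 fun h => hβ₂ (h ▸ hz₁Ω)
      rw [hF x, hF y, hG x hx0, hG y hy0]
      congr 1
      field_simp
    · -- f at β₁, g ∞
      left; left; right
      refine ⟨β₁, hβ₁, ?_⟩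
      have hd : dist (Projectivization.rep y 1 / Projectivization.rep y 0) β₁ ≠ 0 :=
        dist_ne_zero.2 fun h => hβ₁ (h ▸ hz₂Ω)
      rw [hF x hx0, hF y hy0, hG x, hG y]
      congr 1
      field_simp
    · -- both finite
      right
      refine ⟨β₁, hβ₁, β₂, hβ₂, ?_⟩
      have hd1 : dist (Projectivization.rep y 1 / Projectivization.rep y 0) β₁ ≠ 0 :=
        dist_ne_zero.2 fun h => hβ₁ (h ▸ hz₂Ω)
      have hd2 : dist (Projectivization.rep x 1 / Projectivization.rep x 0) β₂ ≠ 0 :=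
        dist_ne_zero.2 fun h => hβ₂ (h ▸ hz₁Ω)
      rw [hF x hx0, hF y hy0, hG x hx0, hG y hy0]
      congr 1
      field_simp
  · intro hr
    rcases hr with (((rfl | ⟨b, hb, rfl⟩) | ⟨b, hb, rfl⟩) | ⟨b₁, hb₁, b₂, hb₂, rfl⟩)
    · obtain ⟨f, hf, c, hc, hF⟩ := exists_dual_infty Ω hchart
      refine ⟨f, hf, f, hf, ?_⟩
      rw [hF x, hF y]
      rw [show (c * ‖Projectivization.rep x 0‖ *
          (c * ‖Projectivization.rep y 0‖)) /
          (c * ‖Projectivization.rep y 0‖ *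
          (c * ‖Projectivization.rep x 0‖)) = 1 by
        field_simp]
      exact Real.log_one.symm
    · obtain ⟨f, hf, c₁, hc₁, hF⟩ := exists_dual_pt Ω hchart b hb
      obtain ⟨g, hg, c₂, hc₂, hG⟩ := exists_dual_infty Ω hchart
      refine ⟨f, hf, g, hg, ?_⟩
      have hd : dist (Projectivization.rep y 1 / Projectivization.rep y 0) b ≠ 0 :=
        dist_ne_zero.2 fun h => hb (h ▸ hz₂Ω)
      rw [hF x hx0, hF y hy0, hG x, hG y]
      congr 1
      field_simp
    · obtain ⟨g, hg, c₂, hc₂, hG⟩ := exists_dual_pt Ω hchart b hb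
      obtain ⟨f, hf, c₁, hc₁, hF⟩ := exists_dual_infty Ω hchart
      refine ⟨f, hf, g, hg, ?_⟩
      have hd : dist (Projectivization.rep x 1 / Projectivization.rep x 0) b ≠ 0 :=
        dist_ne_zero.2 fun h => hb (h ▸ hz₁Ω)
      rw [hF x, hF y, hG x hx0, hG y hy0]
      congr 1
      field_simp
    · obtain ⟨f, hf, c₁, hc₁, hF⟩ := exists_dual_pt Ω hchart b₁ hb₁
      obtain ⟨g, hg, c₂, hc₂, hG⟩ := exists_dual_pt Ω hchart b₂ hb₂
      refine ⟨f, hf, g, hg, ?_⟩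
      have hd1 : dist (Projectivization.rep y 1 / Projectivization.rep y 0) b₁ ≠ 0 :=
        dist_ne_zero.2 fun h => hb₁ (h ▸ hz₂Ω)
      have hd2 : dist (Projectivization.rep x 1 / Projectivization.rep x 0) b₂ ≠ 0 :=
        dist_ne_zero.2 fun h => hb₂ (h ▸ hz₁Ω)
      rw [hF x hx0, hF y hy0, hG x hx0, hG y hy0]
      congr 1
      field_simp

end ComplexConvex
end
end

section
/- Suppose Ω ⊆ ℙ(ℂ^{d+1}) is a proper linearly convex open set and x₀ ∈ Ω. Then there exists R > 0, depending only on x₀, such that for every φ ∈ Aut(Ω) and every lift φ̂ ∈ SL(d+1,ℂ) of φ, d_Ω(φ·x₀, x₀) ≤ R + log(‖φ̂‖·‖φ̂⁻¹‖), where ‖·‖ is the operator norm on End(ℂ^{d+1}) associated to the standard Hermitian norm. -/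
open scoped LinearAlgebra.Projectivization MatrixGroups
open Projectivization

noncomputable section
namespace ComplexConvex

/-! ### Auxiliary lemmas for Statement 12 -/

/-- The Euclidean-space copy of a vector of `ℂ^{d+1}`. -/
def eucl {d : ℕ} (u : Vd d) : EuclideanSpace ℂ (Fin (d + 1)) :=
  (WithLp.equiv 2 (Vd d)).symm u

lemma eucl_sub {d : ℕ} (u v : Vd d) : eucl u - eucl v = eucl (u - v) := rfl

lemma pi_norm_le_eucl {d : ℕ} (u : Vd d) : ‖u‖ ≤ ‖eucl u‖ := by
  have h := (PiLp.lipschitzWith_ofLp 2 (fun _ : Fin (d + 1) => ℂ)).dist_le_mul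
    (eucl u) (eucl 0)
  simpa [eucl, dist_eq_norm] using h

/-- A linear functional on `ℂ^{d+1}`, as a continuous linear map on Euclidean space. -/
def clmOf {d : ℕ} (ψ : Module.Dual ℂ (Vd d)) :
    EuclideanSpace ℂ (Fin (d + 1)) →L[ℂ] ℂ :=
  LinearMap.toContinuousLinearMap (ψ ∘ₗ (WithLp.linearEquiv 2 ℂ (Vd d)).toLinearMap)

lemma clmOf_apply {d : ℕ} (ψ : Module.Dual ℂ (Vd d)) (u : Vd d) :
    clmOf ψ (eucl u) = ψ u := rfl

/-- Lower bound for a functional non-vanishing on a ball. -/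
lemma lower_bound_of_nonvanishing {d : ℕ}
    (ψ : EuclideanSpace ℂ (Fin (d + 1)) →L[ℂ] ℂ)
    (v₀ : EuclideanSpace ℂ (Fin (d + 1))) {ε : ℝ} (hε : 0 < ε)
    (hnv : ∀ u, ‖u - v₀‖ < ε → ψ u ≠ 0) : ε / 2 * ‖ψ‖ ≤ ‖ψ v₀‖ := by
  rcases eq_or_lt_of_le (norm_nonneg ψ) with h0 | hψ
  · rw [← h0, mul_zero]; exact norm_nonneg _
  by_contra hcon
  push_neg at hcon
  obtain ⟨u, hu1, hu2⟩ := ψ.exists_lt_apply_of_lt_opNorm (half_lt_self hψ)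
  have hψu : (0 : ℝ) < ‖ψ u‖ := lt_of_le_of_lt (by positivity) hu2
  have hψu' : ψ u ≠ 0 := fun h => by simp [h] at hψu
  set w := v₀ - (ψ v₀ / ψ u) • u with hw
  have hψw : ψ w = 0 := by
    simp only [hw, map_sub, map_smul, smul_eq_mul]
    rw [div_mul_cancel₀ _ hψu']
    ring
  have hkey : ‖w - v₀‖ * ‖ψ u‖ ≤ ‖ψ v₀‖ * ‖u‖ := by
    have : ‖w - v₀‖ = ‖ψ v₀‖ / ‖ψ u‖ * ‖u‖ := by
      rw [hw]
      simp [norm_smul, norm_div]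
    rw [this, div_mul_eq_mul_div, div_mul_cancel₀ _ (ne_of_gt hψu)]
  have hdist : ‖w - v₀‖ < ε := by
    nlinarith [norm_nonneg u, norm_nonneg (w - v₀), norm_nonneg (ψ v₀)]
  exact hnv w hdist hψw

/-- Points of `Ω` near a given point of `Ω` (openness in homogeneous coordinates). -/
lemma exists_good_ball {d : ℕ} {Ω : Set (CP d)} (hΩ : IsOpen Ω) {x₀ : CP d}
    (hx₀ : x₀ ∈ Ω) :
    ∃ ε > 0, ∀ u : Vd d, ‖eucl u - eucl x₀.rep‖ < ε →
      ∃ hu : u ≠ 0, Projectivization.mk ℂ u hu ∈ Ω := by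
  have hopen : IsOpen {v : {v : Vd d // v ≠ 0} | Projectivization.mk ℂ v.1 v.2 ∈ Ω} := hΩ
  obtain ⟨V, hV, hVeq⟩ := isOpen_induced_iff.mp hopen
  have hv₀mem : (⟨x₀.rep, x₀.rep_nonzero⟩ : {v : Vd d // v ≠ 0}) ∈
      {v : {v : Vd d // v ≠ 0} | Projectivization.mk ℂ v.1 v.2 ∈ Ω} := by
    show Projectivization.mk ℂ x₀.rep x₀.rep_nonzero ∈ Ω
    rw [Projectivization.mk_rep]
    exact hx₀
  rw [← hVeq] at hv₀mem
  obtain ⟨ε₀, hε₀, hball⟩ := Metric.isOpen_iff.mp hV x₀.rep hv₀mem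
  have hnv₀ : (0 : ℝ) < ‖x₀.rep‖ := norm_pos_iff.mpr x₀.rep_nonzero
  refine ⟨min ε₀ ‖x₀.rep‖, lt_min hε₀ hnv₀, ?_⟩
  intro u hu
  have hlt : ‖u - x₀.rep‖ < min ε₀ ‖x₀.rep‖ := by
    refine lt_of_le_of_lt ?_ hu
    rw [eucl_sub]
    exact pi_norm_le_eucl _
  have hu0 : u ≠ 0 := by
    intro h
    rw [h, zero_sub, norm_neg] at hlt
    exact absurd (lt_of_lt_of_le hlt (min_le_right _ _)) (lt_irrefl _)
  have huV : u ∈ V := hball (by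
    rw [Metric.mem_ball, dist_eq_norm]
    exact lt_of_lt_of_le hlt (min_le_left _ _))
  have : (⟨u, hu0⟩ : {v : Vd d // v ≠ 0}) ∈ Subtype.val ⁻¹' V := huV
  rw [hVeq] at this
  exact ⟨hu0, this⟩

/-- A dual functional does not vanish on any lift of a point of `Ω`. -/
lemma dual_ne_zero {d : ℕ} {Ω : Set (CP d)} {f : DualP d} (hf : f ∈ dualSet Ω)
    {u : Vd d} (hu : u ≠ 0) (hmem : Projectivization.mk ℂ u hu ∈ Ω) :
    f.rep u ≠ 0 := by
  have hne := hf (Projectivization.mk ℂ u hu) hmem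
  obtain ⟨a, ha⟩ := (Projectivization.mk_eq_mk_iff ℂ _ _
    (Projectivization.mk ℂ u hu).rep_nonzero hu).mp (Projectivization.mk_rep _)
  intro h0
  apply hne
  rw [← ha, Units.smul_def, map_smul, h0, smul_zero]

lemma mulVec_ne_zero {d : ℕ} (g : SLd d) {u : Vd d} (hu : u ≠ 0) :
    (g : Matrix (Fin (d + 1)) (Fin (d + 1)) ℂ).mulVec u ≠ 0 := by
  intro h
  apply hu
  have h2 : ((g⁻¹ : SLd d) : Matrix (Fin (d + 1)) (Fin (d + 1)) ℂ) *
      (g : Matrix (Fin (d + 1)) (Fin (d + 1)) ℂ) = 1 := by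
    rw [← Matrix.SpecialLinearGroup.coe_mul, inv_mul_cancel,
      Matrix.SpecialLinearGroup.coe_one]
  calc u = (1 : Matrix (Fin (d + 1)) (Fin (d + 1)) ℂ).mulVec u := by
        rw [Matrix.one_mulVec]
    _ = ((g⁻¹ : SLd d) : Matrix (Fin (d + 1)) (Fin (d + 1)) ℂ).mulVec
        ((g : Matrix (Fin (d + 1)) (Fin (d + 1)) ℂ).mulVec u) := by
        rw [Matrix.mulVec_mulVec, h2]
    _ = 0 := by rw [h, Matrix.mulVec_zero]

lemma pslPerm_mk {d : ℕ} (g : SLd d) {u : Vd d} (hu : u ≠ 0)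
    (hgu : (g : Matrix (Fin (d + 1)) (Fin (d + 1)) ℂ).mulVec u ≠ 0) :
    pslPerm d (QuotientGroup.mk g) (Projectivization.mk ℂ u hu) =
      Projectivization.mk ℂ ((g : Matrix (Fin (d + 1)) (Fin (d + 1)) ℂ).mulVec u) hgu := by
  have h1 : pslPerm d (QuotientGroup.mk g) = slPerm d g := rfl
  rw [h1]
  show slEquiv g (Projectivization.mk ℂ u hu) = _
  simp only [slEquiv, Equiv.coe_fn_mk]
  rw [Projectivization.map_mk]
  have hval : (Matrix.SpecialLinearGroup.toLin' g).toLinearMap u =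
      (g : Matrix (Fin (d + 1)) (Fin (d + 1)) ℂ).mulVec u := by
    show Matrix.SpecialLinearGroup.toLin' g u = _
    rw [Matrix.SpecialLinearGroup.toLin'_apply, Matrix.toLin'_apply]
  exact (Projectivization.mk_eq_mk_iff ℂ _ _ _ hgu).mpr ⟨1, by simp [hval]⟩

/-- Elementary ratio estimate used in Statement 12. -/
lemma ratio_bound {e nv nF nH nG nG' a1 a2 b1 b2 : ℝ} (he : 0 < e) (hnv : 0 < nv)
    (hF : 0 < nF) (hH : 0 < nH) (hG : 0 < nG) (hG' : 0 < nG')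
    (ha1 : 0 ≤ a1) (ha2 : 0 ≤ a2)
    (h1 : a1 ≤ nF * (nG * nv)) (h2 : a2 ≤ nH * nv)
    (h3 : e / 2 * nF ≤ b1) (h4 : e / 2 * (nH / nG') ≤ b2) :
    a1 * a2 / (b1 * b2) ≤ (2 / e) ^ 2 * nv ^ 2 * (nG * nG') := by
  have hb1 : 0 < e / 2 * nF := by positivity
  have hb2 : 0 < e / 2 * (nH / nG') := by positivity
  have hstep : a1 * a2 / (b1 * b2) ≤ (nF * (nG * nv) * (nH * nv)) /
      ((e / 2 * nF) * (e / 2 * (nH / nG'))) :=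
    div_le_div₀ (by positivity) (mul_le_mul h1 h2 ha2 (by positivity)) (by positivity)
      (mul_le_mul h3 h4 hb2.le (hb1.le.trans h3))
  refine hstep.trans (le_of_eq ?_)
  field_simp

set_option maxHeartbeats 2000000 in
/-- Translation distance estimate for the Hilbert metric. -/
theorem statement_12 {d : ℕ} (Ω : Set (CP d)) (hΩopen : IsOpen Ω)
    (hlc : LinearlyConvex Ω) (hproper : IsProperDomain Ω)
    (x₀ : CP d) (hx₀ : x₀ ∈ Ω) :
    ∃ R > 0, ∀ φ ∈ Aut Ω, ∀ g : SLd d, (QuotientGroup.mk g : PSLd d) = φ →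
      hilbertDist Ω (pslPerm d φ x₀) x₀ ≤
        R + Real.log
          (opNorm (g : Matrix (Fin (d + 1)) (Fin (d + 1)) ℂ) *
            opNorm ((g⁻¹ : SLd d) : Matrix (Fin (d + 1)) (Fin (d + 1)) ℂ)) := by
  obtain ⟨ε, hε, hball⟩ := exists_good_ball hΩopen hx₀
  have hv₀ : x₀.rep ≠ 0 := x₀.rep_nonzero
  have hev₀ : (0 : ℝ) < ‖eucl x₀.rep‖ :=
    lt_of_lt_of_le (norm_pos_iff.mpr hv₀) (pi_norm_le_eucl _)
  set C : ℝ := (2 / ε) ^ 2 * ‖eucl x₀.rep‖ ^ 2 with hC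
  have hCpos : 0 < C := by positivity
  refine ⟨max (Real.log C) 0 + 1, by positivity, ?_⟩
  intro φ hφ g hg
  set G := Matrix.toEuclideanCLM (𝕜 := ℂ)
    (g : Matrix (Fin (d + 1)) (Fin (d + 1)) ℂ) with hGdef
  set G' := Matrix.toEuclideanCLM (𝕜 := ℂ)
    ((g⁻¹ : SLd d) : Matrix (Fin (d + 1)) (Fin (d + 1)) ℂ) with hG'def
  have hGG' : G * G' = 1 := by
    rw [hGdef, hG'def, ← map_mul, ← Matrix.SpecialLinearGroup.coe_mul, mul_inv_cancel,
      Matrix.SpecialLinearGroup.coe_one, map_one]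
  have hprod1 : 1 ≤ ‖G‖ * ‖G'‖ := by
    calc (1 : ℝ) = ‖(1 : EuclideanSpace ℂ (Fin (d + 1)) →L[ℂ]
          EuclideanSpace ℂ (Fin (d + 1)))‖ := by rw [norm_one]
      _ = ‖G * G'‖ := by rw [hGG']
      _ ≤ ‖G‖ * ‖G'‖ := norm_mul_le _ _
  have hGpos : 0 < ‖G‖ := by nlinarith [norm_nonneg G, norm_nonneg G']
  have hG'pos : 0 < ‖G'‖ := by nlinarith [norm_nonneg G, norm_nonneg G']
  have hPdef : opNorm (g : Matrix (Fin (d + 1)) (Fin (d + 1)) ℂ) *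
      opNorm ((g⁻¹ : SLd d) : Matrix (Fin (d + 1)) (Fin (d + 1)) ℂ) = ‖G‖ * ‖G'‖ := rfl
  have hPpos : 0 < ‖G‖ * ‖G'‖ := mul_pos hGpos hG'pos
  have hlogP : 0 ≤ Real.log (‖G‖ * ‖G'‖) := Real.log_nonneg hprod1
  -- the image point
  have hyΩ : pslPerm d φ x₀ ∈ Ω := by
    have himg : pslPerm d φ '' Ω = Ω := hφ
    rw [← himg]
    exact Set.mem_image_of_mem _ hx₀
  have hw0 : (g : Matrix (Fin (d + 1)) (Fin (d + 1)) ℂ).mulVec x₀.rep ≠ 0 :=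
    mulVec_ne_zero g hv₀
  have hymk : pslPerm d φ x₀ = Projectivization.mk ℂ _ hw0 := by
    conv_lhs => rw [← hg, ← Projectivization.mk_rep x₀]
    exact pslPerm_mk g hv₀ hw0
  obtain ⟨c, hc⟩ : ∃ c : ℂˣ,
      (c : ℂ) • (g : Matrix (Fin (d + 1)) (Fin (d + 1)) ℂ).mulVec x₀.rep =
        (pslPerm d φ x₀).rep := by
    obtain ⟨c, hc⟩ := (Projectivization.mk_eq_mk_iff ℂ _ _
      (pslPerm d φ x₀).rep_nonzero hw0).mp (by rw [Projectivization.mk_rep, hymk])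
    exact ⟨c, hc⟩
  have habsc : 0 < ‖(c : ℂ)‖ := norm_pos_iff.mpr c.ne_zero
  rw [hilbertDist]
  apply Real.sSup_le
  · rintro r ⟨f, hf, h, hh, rfl⟩
    set F := clmOf f.rep with hF
    set H := clmOf h.rep with hH
    set Hg := clmOf (h.rep ∘ₗ (Matrix.toLin'
      (g : Matrix (Fin (d + 1)) (Fin (d + 1)) ℂ))) with hHg
    -- lower bounds from non-vanishing
    have hFlow : ε / 2 * ‖F‖ ≤ ‖F (eucl x₀.rep)‖ := by
      apply lower_bound_of_nonvanishing _ _ hε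
      intro u hu
      obtain ⟨hu0, humem⟩ := hball (WithLp.equiv 2 (Vd d) u) hu
      exact dual_ne_zero hf hu0 humem
    have hHglow : ε / 2 * ‖Hg‖ ≤ ‖Hg (eucl x₀.rep)‖ := by
      apply lower_bound_of_nonvanishing _ _ hε
      intro u hu
      obtain ⟨hu0, humem⟩ := hball (WithLp.equiv 2 (Vd d) u) hu
      have hgu0 : (g : Matrix (Fin (d + 1)) (Fin (d + 1)) ℂ).mulVec
          (WithLp.equiv 2 (Vd d) u) ≠ 0 := mulVec_ne_zero g hu0
      have hgumem : Projectivization.mk ℂ _ hgu0 ∈ Ω := by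
        rw [← pslPerm_mk g hu0 hgu0, hg]
        have himg : pslPerm d φ '' Ω = Ω := hφ
        rw [← himg]
        exact Set.mem_image_of_mem _ humem
      have := dual_ne_zero hh hgu0 hgumem
      show h.rep (Matrix.toLin' (g : Matrix (Fin (d + 1)) (Fin (d + 1)) ℂ)
        (WithLp.equiv 2 (Vd d) u)) ≠ 0
      rwa [Matrix.toLin'_apply]
    -- operator norm comparisons
    have hcomp : H = Hg.comp G' := by
      ext u
      show h.rep (WithLp.equiv 2 (Vd d) u) =
        h.rep (Matrix.toLin' (g : Matrix (Fin (d + 1)) (Fin (d + 1)) ℂ)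
          (WithLp.equiv 2 (Vd d) (G' u)))
      congr 1
      have h1 : WithLp.equiv 2 (Vd d) (G' u) =
          Matrix.toLin' ((g⁻¹ : SLd d) : Matrix (Fin (d + 1)) (Fin (d + 1)) ℂ)
            (WithLp.equiv 2 (Vd d) u) := rfl
      have hmat : (g : Matrix (Fin (d + 1)) (Fin (d + 1)) ℂ) *
          ((g⁻¹ : SLd d) : Matrix (Fin (d + 1)) (Fin (d + 1)) ℂ) = 1 := by
        rw [← Matrix.SpecialLinearGroup.coe_mul, mul_inv_cancel,
          Matrix.SpecialLinearGroup.coe_one]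
      rw [h1, Matrix.toLin'_apply, Matrix.toLin'_apply, Matrix.mulVec_mulVec, hmat,
        Matrix.one_mulVec]
    have hHleq : ‖H‖ ≤ ‖Hg‖ * ‖G'‖ := by
      rw [hcomp]
      exact ContinuousLinearMap.opNorm_comp_le _ _
    -- positivity of the various quantities
    have hfx₀ : f.rep x₀.rep ≠ 0 := hf x₀ hx₀
    have hhx₀ : h.rep x₀.rep ≠ 0 := hh x₀ hx₀
    have hfy : f.rep (pslPerm d φ x₀).rep ≠ 0 := hf _ hyΩ
    have hhy : h.rep (pslPerm d φ x₀).rep ≠ 0 := hh _ hyΩ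
    have hFpos : 0 < ‖F‖ := by
      rw [norm_pos_iff]
      intro h0
      apply hfx₀
      have := clmOf_apply f.rep x₀.rep
      rw [← hF, h0] at this
      simpa using this.symm
    have hHpos : 0 < ‖H‖ := by
      rw [norm_pos_iff]
      intro h0
      apply hhx₀
      have := clmOf_apply h.rep x₀.rep
      rw [← hH, h0] at this
      simpa using this.symm
    -- rewrite the lifts of `φ x₀`
    have hval1 : ‖f.rep (pslPerm d φ x₀).rep‖ = ‖(c : ℂ)‖ *
        ‖f.rep ((g : Matrix (Fin (d + 1)) (Fin (d + 1)) ℂ).mulVec x₀.rep)‖ := by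
      rw [← hc, map_smul, smul_eq_mul, norm_mul]
    have hval2 : ‖h.rep (pslPerm d φ x₀).rep‖ = ‖(c : ℂ)‖ *
        ‖h.rep ((g : Matrix (Fin (d + 1)) (Fin (d + 1)) ℂ).mulVec x₀.rep)‖ := by
      rw [← hc, map_smul, smul_eq_mul, norm_mul]
    -- numerator upper bounds
    have heF : F (G (eucl x₀.rep)) =
        f.rep ((g : Matrix (Fin (d + 1)) (Fin (d + 1)) ℂ).mulVec x₀.rep) := by
      show f.rep (Matrix.toLin' (g : Matrix (Fin (d + 1)) (Fin (d + 1)) ℂ) x₀.rep) = _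
      rw [Matrix.toLin'_apply]
    have hfw : ‖f.rep
        ((g : Matrix (Fin (d + 1)) (Fin (d + 1)) ℂ).mulVec x₀.rep)‖ ≤
        ‖F‖ * (‖G‖ * ‖eucl x₀.rep‖) := by
      calc ‖f.rep ((g : Matrix (Fin (d + 1)) (Fin (d + 1)) ℂ).mulVec x₀.rep)‖
          = ‖F (G (eucl x₀.rep))‖ := by rw [heF]
        _ ≤ ‖F‖ * ‖G (eucl x₀.rep)‖ := F.le_opNorm _
        _ ≤ ‖F‖ * (‖G‖ * ‖eucl x₀.rep‖) :=
            mul_le_mul_of_nonneg_left (G.le_opNorm _) (norm_nonneg F)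
    have hhv₀ : ‖h.rep x₀.rep‖ ≤ ‖H‖ * ‖eucl x₀.rep‖ := by
      calc ‖h.rep x₀.rep‖ = ‖H (eucl x₀.rep)‖ := by
            rw [clmOf_apply]
        _ ≤ ‖H‖ * ‖eucl x₀.rep‖ := H.le_opNorm _
    -- denominator lower bounds
    have hfv₀ : ε / 2 * ‖F‖ ≤ ‖f.rep x₀.rep‖ := by
      rw [← clmOf_apply f.rep x₀.rep]
      exact hFlow
    have hheg : Hg (eucl x₀.rep) =
        h.rep ((g : Matrix (Fin (d + 1)) (Fin (d + 1)) ℂ).mulVec x₀.rep) := by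
      show h.rep (Matrix.toLin' (g : Matrix (Fin (d + 1)) (Fin (d + 1)) ℂ) x₀.rep) = _
      rw [Matrix.toLin'_apply]
    have hhw : ε / 2 * (‖H‖ / ‖G'‖) ≤ ‖h.rep
        ((g : Matrix (Fin (d + 1)) (Fin (d + 1)) ℂ).mulVec x₀.rep)‖ := by
      have h2 : ‖H‖ / ‖G'‖ ≤ ‖Hg‖ := by
        rw [div_le_iff₀ hG'pos]
        exact hHleq
      calc ε / 2 * (‖H‖ / ‖G'‖) ≤ ε / 2 * ‖Hg‖ := by
            apply mul_le_mul_of_nonneg_left h2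
            positivity
        _ ≤ ‖Hg (eucl x₀.rep)‖ := hHglow
        _ = _ := by rw [hheg]
    -- put everything together
    have hA : (‖f.rep (pslPerm d φ x₀).rep‖ * ‖h.rep x₀.rep‖) /
        (‖f.rep x₀.rep‖ * ‖h.rep (pslPerm d φ x₀).rep‖) ≤
        C * (‖G‖ * ‖G'‖) := by
      rw [hval1, hval2]
      set a₁ := ‖f.rep
        ((g : Matrix (Fin (d + 1)) (Fin (d + 1)) ℂ).mulVec x₀.rep)‖
      set a₂ := ‖h.rep x₀.rep‖
      set b₁ := ‖f.rep x₀.rep‖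
      set b₂ := ‖h.rep
        ((g : Matrix (Fin (d + 1)) (Fin (d + 1)) ℂ).mulVec x₀.rep)‖
      have hcancel : ‖(c : ℂ)‖ * a₁ * a₂ / (b₁ * (‖(c : ℂ)‖ * b₂)) =
          a₁ * a₂ / (b₁ * b₂) := by
        rw [show ‖(c : ℂ)‖ * a₁ * a₂ = ‖(c : ℂ)‖ * (a₁ * a₂) by ring,
          show b₁ * (‖(c : ℂ)‖ * b₂) = ‖(c : ℂ)‖ * (b₁ * b₂) by ring,
          mul_div_mul_left _ _ (ne_of_gt habsc)]
      rw [hcancel, hC]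
      exact ratio_bound hε hev₀ hFpos hHpos hGpos hG'pos (norm_nonneg _)
        (norm_nonneg _) hfw hhv₀ hfv₀ hhw
    have hApos : 0 < (‖f.rep (pslPerm d φ x₀).rep‖ *
        ‖h.rep x₀.rep‖) /
        (‖f.rep x₀.rep‖ * ‖h.rep (pslPerm d φ x₀).rep‖) := by
      have p1 : 0 < ‖f.rep (pslPerm d φ x₀).rep‖ := norm_pos_iff.mpr hfy
      have p2 : 0 < ‖h.rep x₀.rep‖ := norm_pos_iff.mpr hhx₀
      have p3 : 0 < ‖f.rep x₀.rep‖ := norm_pos_iff.mpr hfx₀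
      have p4 : 0 < ‖h.rep (pslPerm d φ x₀).rep‖ := norm_pos_iff.mpr hhy
      positivity
    calc Real.log _ ≤ Real.log (C * (‖G‖ * ‖G'‖)) := Real.log_le_log hApos hA
      _ = Real.log C + Real.log (‖G‖ * ‖G'‖) :=
          Real.log_mul (ne_of_gt hCpos) (ne_of_gt hPpos)
      _ ≤ max (Real.log C) 0 + 1 + Real.log
          (opNorm (g : Matrix (Fin (d + 1)) (Fin (d + 1)) ℂ) *
            opNorm ((g⁻¹ : SLd d) : Matrix (Fin (d + 1)) (Fin (d + 1)) ℂ)) := by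
          rw [hPdef]
          have := le_max_left (Real.log C) 0
          linarith
  · rw [hPdef]
    have := le_max_right (Real.log C) 0
    linarith

end ComplexConvex
end
end

section
/- Suppose G ≤ SL(d+1,ℂ) is a connected closed subgroup that is almost unipotent, and g₁, …, g_k are fixed elements of G. Then there exists a constant C > 0 such that for every N > 0 and every choice of indices i₁, …, i_N ∈ {1,…,k}, the operator norm satisfies ‖g_{i₁} ⋯ g_{i_N}‖ ≤ C·N^d. -/
open scoped LinearAlgebra.Projectivization MatrixGroups
open Projectivization

noncomputable section
namespace ComplexConvex

/-- A connected closed subgroup `G ≤ SL(d+1,ℂ)` is almost unipotent if it preserves a flag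
of subspaces on whose successive quotients the induced action is bounded.  Boundedness of
the induced action on the quotient `V_{i+1}/V_i` is expressed using the quotient norm, via
distances to `V_i`. -/
def IsAlmostUnipotentSubgroup {d : ℕ} (G : Subgroup (SLd d)) : Prop :=
  ∃ (k : ℕ) (V : Fin (k + 2) → Submodule ℂ (Vd d)),
    StrictMono V ∧ V 0 = ⊥ ∧ V (Fin.last (k + 1)) = ⊤ ∧
    (∀ g ∈ G, ∀ i : Fin (k + 2), ∀ v ∈ V i,
      (g : Matrix (Fin (d + 1)) (Fin (d + 1)) ℂ).mulVec v ∈ V i) ∧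
    ∀ i : Fin (k + 1), ∃ C : ℝ, ∀ g ∈ G, ∀ v ∈ V i.succ,
      Metric.infDist ((g : Matrix (Fin (d + 1)) (Fin (d + 1)) ℂ).mulVec v)
          ((V i.castSucc : Submodule ℂ (Vd d)) : Set (Vd d)) ≤
        C * Metric.infDist v ((V i.castSucc : Submodule ℂ (Vd d)) : Set (Vd d))

set_option maxHeartbeats 1000000 in
/-- Polynomial growth of word products in an almost unipotent group. -/
theorem statement_15 {d : ℕ} (G : Subgroup (SLd d))
    (hclosed : IsClosed (G : Set (SLd d))) (hconn : IsConnected (G : Set (SLd d)))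
    (hau : IsAlmostUnipotentSubgroup G) (k : ℕ) (g : Fin k → G) :
    ∃ C > 0, ∀ N : ℕ, 0 < N → ∀ idx : Fin N → Fin k,
      opNorm ((((List.ofFn fun j => (g (idx j) : SLd d)).prod : SLd d) :
          Matrix (Fin (d + 1)) (Fin (d + 1)) ℂ)) ≤ C * (N : ℝ) ^ d := by
  classical
  obtain ⟨k', V, hVmono, hVbot, hVtop, hinv, hbdd⟩ := hau
  -- a uniform bound for the generators
  have single : ∀ A : Matrix (Fin (d+1)) (Fin (d+1)) ℂ, ∃ M : ℝ, ∀ v : Vd d,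
      ‖A.mulVec v‖ ≤ M * ‖v‖ := by
    intro A
    refine ⟨‖LinearMap.toContinuousLinearMap (Matrix.mulVecLin A)‖, fun v => ?_⟩
    simpa [LinearMap.coe_toContinuousLinearMap', Matrix.mulVecLin_apply] using
      (LinearMap.toContinuousLinearMap (Matrix.mulVecLin A)).le_opNorm v
  choose M₀ hM₀ using fun j : Fin k => single ((g j : SLd d) : Matrix _ _ ℂ)
  set M : ℝ := 1 + ∑ j : Fin k, |M₀ j| with hMdef
  have hM1 : (1:ℝ) ≤ M := by
    have : (0:ℝ) ≤ ∑ j : Fin k, |M₀ j| := Finset.sum_nonneg fun j _ => abs_nonneg _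
    simp [hMdef]; linarith
  have hM : ∀ j : Fin k, ∀ v : Vd d,
      ‖((g j : SLd d) : Matrix (Fin (d+1)) (Fin (d+1)) ℂ).mulVec v‖ ≤ M * ‖v‖ := by
    intro j v
    refine (hM₀ j v).trans (mul_le_mul_of_nonneg_right ?_ (norm_nonneg v))
    have h1 : M₀ j ≤ |M₀ j| := le_abs_self _
    have h2 : |M₀ j| ≤ ∑ j : Fin k, |M₀ j| :=
      Finset.single_le_sum (fun j _ => abs_nonneg (M₀ j)) (Finset.mem_univ j)
    simp only [hMdef]; linarith
  -- generator lists
  set Gen : List (SLd d) → Prop := fun l => ∀ a ∈ l, ∃ j, a = ((g j : SLd d)) with hGen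
  have prodmem : ∀ l : List (SLd d), Gen l → l.prod ∈ G := by
    intro l hl
    refine list_prod_mem fun x hx => ?_
    obtain ⟨j, rfl⟩ := hl x hx
    exact (g j).2
  -- nearest point
  have attain : ∀ (S : Submodule ℂ (Vd d)) (x : Vd d), ∃ w ∈ S,
      ‖x - w‖ = Metric.infDist x (S : Set (Vd d)) := by
    intro S x
    obtain ⟨w, hwS, hw⟩ := (Submodule.closed_of_finiteDimensional S).exists_infDist_eq_dist
      ⟨0, S.zero_mem⟩ x
    exact ⟨w, hwS, by rw [← dist_eq_norm]; exact hw.symm⟩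
  have infle : ∀ (S : Submodule ℂ (Vd d)) (x : Vd d),
      Metric.infDist x (S : Set (Vd d)) ≤ ‖x‖ := by
    intro S x
    simpa [dist_zero_right] using Metric.infDist_le_dist_of_mem (S.zero_mem)
  -- main induction on the level of the flag
  have key : ∀ i : ℕ, ∀ hi : i + 1 < k' + 2, ∃ D : ℝ, 1 ≤ D ∧ ∀ l : List (SLd d), Gen l →
      ∀ v ∈ V ⟨i+1, hi⟩, ‖((l.prod : SLd d) : Matrix (Fin (d+1)) (Fin (d+1)) ℂ).mulVec v‖
        ≤ D * ((l.length : ℝ) + 1) ^ i * ‖v‖ := by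
    intro i
    induction i with
    | zero =>
      intro hi
      obtain ⟨C, hC⟩ := hbdd ⟨0, by omega⟩
      refine ⟨max C 1, le_max_right _ _, fun l hl v hv => ?_⟩
      have hv' : v ∈ V (⟨0, by omega⟩ : Fin (k'+1)).succ := by
        convert hv using 2
        ext; simp
      have h1 := hC l.prod (prodmem l hl) v hv'
      have ecast : (⟨0, by omega⟩ : Fin (k'+1)).castSucc = (0 : Fin (k'+2)) := by
        ext; simp
      rw [ecast, hVbot] at h1
      simp only [Submodule.bot_coe, Metric.infDist_singleton, dist_zero_right] at h1
      have : ‖((l.prod : SLd d) : Matrix (Fin (d+1)) (Fin (d+1)) ℂ).mulVec v‖ ≤ max C 1 * ‖v‖ := by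
        refine h1.trans (mul_le_mul_of_nonneg_right (le_max_left _ _) (norm_nonneg _))
      simpa using this
    | succ n ih =>
      intro hi
      obtain ⟨D, hD1, hDb⟩ := ih (by omega)
      obtain ⟨C, hC⟩ := hbdd ⟨n+1, by omega⟩
      set ilow : Fin (k'+1) := ⟨n+1, by omega⟩ with hilow
      set B : ℝ := max C 1 with hBdef
      have hB1 : (1:ℝ) ≤ B := le_max_right _ _
      have hq1 : (0:ℝ) ≤ D*(1+B) := mul_nonneg (by linarith) (by linarith)
      have hq2 : (0:ℝ) ≤ D*(B*(1+M)) := mul_nonneg (by linarith) (mul_nonneg (by linarith) (by linarith))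
      refine ⟨D*(1+B) + D*(B*(1+M)) + B, by linarith, fun l hl v hv => ?_⟩
      have hv' : v ∈ V ilow.succ := by
        convert hv using 2
        ext; simp [hilow]
      have ecs : ilow.castSucc = (⟨n+1, by omega⟩ : Fin (k'+2)) := by ext; simp [hilow]
      -- suffix products
      have hlsub : ∀ a : ℕ, Gen (l.drop a) := fun a x hx => hl x (List.drop_subset _ _ hx)
      have hmemG : ∀ a : ℕ, (l.drop a).prod ∈ G := fun a => prodmem _ (hlsub a)
      set u : ℕ → Vd d := fun a =>
        (((l.drop a).prod : SLd d) : Matrix (Fin (d+1)) (Fin (d+1)) ℂ).mulVec v with hudef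
      have huN : u l.length = v := by
        simp [hudef, List.drop_length]
      have hudist : ∀ a : ℕ, Metric.infDist (u a) ((V ilow.castSucc : Submodule ℂ (Vd d)) : Set (Vd d)) ≤ B * ‖v‖ := by
        intro a
        have h1 := hC _ (hmemG a) v hv'
        have h0 : 0 ≤ Metric.infDist v ((V ilow.castSucc : Submodule ℂ (Vd d)) : Set (Vd d)) :=
          Metric.infDist_nonneg
        have h2 := infle (V ilow.castSucc) v
        calc Metric.infDist (u a) ((V ilow.castSucc : Submodule ℂ (Vd d)) : Set (Vd d))
            ≤ C * Metric.infDist v ((V ilow.castSucc : Submodule ℂ (Vd d)) : Set (Vd d)) := h1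
          _ ≤ B * Metric.infDist v ((V ilow.castSucc : Submodule ℂ (Vd d)) : Set (Vd d)) :=
              mul_le_mul_of_nonneg_right (le_max_left _ _) h0
          _ ≤ B * ‖v‖ := mul_le_mul_of_nonneg_left h2 (by linarith)
      have hwex : ∀ a : ℕ, ∃ w, w ∈ V ilow.castSucc ∧ ‖u a - w‖ ≤ B * ‖v‖ := by
        intro a
        obtain ⟨w, hw1, hw2⟩ := attain (V ilow.castSucc) (u a)
        exact ⟨w, hw1, le_trans (le_of_eq hw2) (hudist a)⟩
      choose w hwmem hwnear using hwex
      set E : ℕ → SLd d := fun a => if h : a < l.length then l.get ⟨a, h⟩ else 1 with hEdef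
      set δ : ℕ → Vd d := fun a =>
        ((E a : SLd d) : Matrix (Fin (d+1)) (Fin (d+1)) ℂ).mulVec (w (a+1)) - w a with hδdef
      have hEgen : ∀ a (h : a < l.length), ∃ j, E a = (g j : SLd d) := by
        intro a h
        have : E a = l.get ⟨a, h⟩ := dif_pos h
        obtain ⟨j, hj⟩ := hl _ (List.get_mem l ⟨a, h⟩)
        exact ⟨j, this.trans hj⟩
      have hEG : ∀ a, E a ∈ G := by
        intro a
        by_cases h : a < l.length
        · obtain ⟨j, hj⟩ := hEgen a h; rw [hj]; exact (g j).2
        · simp only [hEdef, dif_neg h]; exact one_mem G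
      have hEM : ∀ a (h : a < l.length) (x : Vd d),
          ‖((E a : SLd d) : Matrix (Fin (d+1)) (Fin (d+1)) ℂ).mulVec x‖ ≤ M * ‖x‖ := by
        intro a h x
        obtain ⟨j, hj⟩ := hEgen a h
        rw [hj]; exact hM j x
      have hurel : ∀ a (h : a < l.length),
          u a = ((E a : SLd d) : Matrix (Fin (d+1)) (Fin (d+1)) ℂ).mulVec (u (a+1)) := by
        intro a h
        have hd : l.drop a = l.get ⟨a, h⟩ :: l.drop (a+1) := by
          simpa using (List.drop_eq_getElem_cons h)
        have hEa : E a = l.get ⟨a, h⟩ := dif_pos h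
        simp only [hudef, hd, List.prod_cons, Matrix.SpecialLinearGroup.coe_mul, hEa,
          Matrix.mulVec_mulVec]
      have hδb : ∀ a, a < l.length → ‖δ a‖ ≤ B * (1 + M) * ‖v‖ := by
        intro a h
        have hid : δ a = ((E a : SLd d) : Matrix (Fin (d+1)) (Fin (d+1)) ℂ).mulVec
            (w (a+1) - u (a+1)) + (u a - w a) := by
          rw [Matrix.mulVec_sub, hδdef]
          simp only
          rw [← hurel a h]
          abel
        calc ‖δ a‖ ≤ ‖((E a : SLd d) : Matrix (Fin (d+1)) (Fin (d+1)) ℂ).mulVec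
              (w (a+1) - u (a+1))‖ + ‖u a - w a‖ := by rw [hid]; exact norm_add_le _ _
          _ ≤ M * ‖w (a+1) - u (a+1)‖ + B * ‖v‖ := by
              have := hEM a h (w (a+1) - u (a+1))
              have := hwnear a
              linarith
          _ ≤ M * (B * ‖v‖) + B * ‖v‖ := by
              have h1 : ‖w (a+1) - u (a+1)‖ = ‖u (a+1) - w (a+1)‖ := norm_sub_rev _ _
              have h2 := hwnear (a+1)
              nlinarith [norm_nonneg (w (a+1) - u (a+1))]
          _ = B * (1 + M) * ‖v‖ := by ring
      have hδmem : ∀ a, δ a ∈ V ilow.castSucc := by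
        intro a
        refine sub_mem ?_ (hwmem a)
        have := hinv (E a) (hEG a) (ilow.castSucc) (w (a+1)) (hwmem (a+1))
        exact this
      -- telescoping identity
      have tel : ∀ m, m ≤ l.length →
          w 0 = (((l.take m).prod : SLd d) : Matrix (Fin (d+1)) (Fin (d+1)) ℂ).mulVec (w m)
            - ∑ a ∈ Finset.range m,
                (((l.take a).prod : SLd d) : Matrix (Fin (d+1)) (Fin (d+1)) ℂ).mulVec (δ a) := by
        intro m
        induction m with
        | zero => intro _; simp
        | succ m ihm =>
          intro hm
          have hm' : m < l.length := by omega
          have hEm : E m = l.get ⟨m, hm'⟩ := dif_pos hm'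
          have e1 : (l.take (m+1)).prod = (l.take m).prod * E m := by
            rw [hEm]
            simpa using List.prod_take_succ l m hm'
          have e2 : ((E m : SLd d) : Matrix (Fin (d+1)) (Fin (d+1)) ℂ).mulVec (w (m+1))
              = δ m + w m := by
            simp [hδdef]
          rw [ihm (by omega), e1, Finset.sum_range_succ,
            Matrix.SpecialLinearGroup.coe_mul, ← Matrix.mulVec_mulVec, e2, Matrix.mulVec_add]
          abel
      -- prefix product bounds on the lower level
      have hpre : ∀ a, a ≤ l.length → ∀ x, x ∈ V ilow.castSucc →
          ‖(((l.take a).prod : SLd d) : Matrix (Fin (d+1)) (Fin (d+1)) ℂ).mulVec x‖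
            ≤ D * ((l.length : ℝ) + 1) ^ n * ‖x‖ := by
        intro a ha x hx
        have hx' : x ∈ V ⟨n+1, by omega⟩ := ecs ▸ hx
        have hgen : Gen (l.take a) := fun y hy => hl y (List.take_subset _ _ hy)
        have h1 := hDb (l.take a) hgen x hx'
        refine h1.trans ?_
        have hlen : ((l.take a).length : ℝ) + 1 ≤ (l.length : ℝ) + 1 := by
          have h2 : (l.take a).length ≤ l.length := le_trans (List.length_take_le a l) ha
          have h3 : ((l.take a).length : ℝ) ≤ (l.length : ℝ) := by exact_mod_cast h2
          linarith
        have hD0 : (0:ℝ) ≤ D := by linarith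
        gcongr
      -- assemble
      have hwN : ‖w l.length‖ ≤ (1 + B) * ‖v‖ := by
        have h1 := hwnear l.length
        rw [huN] at h1
        calc ‖w l.length‖ = ‖v - (v - w l.length)‖ := by rw [sub_sub_cancel]
          _ ≤ ‖v‖ + ‖v - w l.length‖ := norm_sub_le _ _
          _ ≤ ‖v‖ + B * ‖v‖ := by linarith
          _ = (1 + B) * ‖v‖ := by ring
      have hw0 : ‖w 0‖ ≤ D * ((l.length : ℝ) + 1) ^ n * ((1 + B) * ‖v‖)
          + (l.length : ℝ) * (D * ((l.length : ℝ) + 1) ^ n * (B * (1 + M) * ‖v‖)) := by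
        rw [tel l.length le_rfl]
        refine (norm_sub_le _ _).trans ?_
        have t1 : ‖(((l.take l.length).prod : SLd d) : Matrix (Fin (d+1)) (Fin (d+1)) ℂ).mulVec
            (w l.length)‖ ≤ D * ((l.length : ℝ) + 1) ^ n * ((1 + B) * ‖v‖) := by
          refine (hpre l.length le_rfl _ (hwmem l.length)).trans ?_
          exact mul_le_mul_of_nonneg_left hwN
            (mul_nonneg (by linarith) (pow_nonneg (by positivity) n))
        have t2 : ‖∑ a ∈ Finset.range l.length,
            (((l.take a).prod : SLd d) : Matrix (Fin (d+1)) (Fin (d+1)) ℂ).mulVec (δ a)‖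
            ≤ (l.length : ℝ) * (D * ((l.length : ℝ) + 1) ^ n * (B * (1 + M) * ‖v‖)) := by
          refine (norm_sum_le _ _).trans ?_
          have hterm : ∀ a ∈ Finset.range l.length,
              ‖(((l.take a).prod : SLd d) : Matrix (Fin (d+1)) (Fin (d+1)) ℂ).mulVec (δ a)‖
              ≤ D * ((l.length : ℝ) + 1) ^ n * (B * (1 + M) * ‖v‖) := by
            intro a ha
            have ha' : a < l.length := Finset.mem_range.mp ha
            refine (hpre a (le_of_lt ha') _ (hδmem a)).trans ?_
            exact mul_le_mul_of_nonneg_left (hδb a ha')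
              (mul_nonneg (by linarith) (pow_nonneg (by positivity) n))
          calc ∑ a ∈ Finset.range l.length,
              ‖(((l.take a).prod : SLd d) : Matrix (Fin (d+1)) (Fin (d+1)) ℂ).mulVec (δ a)‖
              ≤ ∑ _a ∈ Finset.range l.length,
                (D * ((l.length : ℝ) + 1) ^ n * (B * (1 + M) * ‖v‖)) :=
                Finset.sum_le_sum hterm
            _ = (l.length : ℝ) * (D * ((l.length : ℝ) + 1) ^ n * (B * (1 + M) * ‖v‖)) := by
                simp [Finset.sum_const, Finset.card_range, nsmul_eq_mul]
        linarith
      have hfin : ‖((l.prod : SLd d) : Matrix (Fin (d+1)) (Fin (d+1)) ℂ).mulVec v‖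
          ≤ ‖w 0‖ + B * ‖v‖ := by
        have h1 := hwnear 0
        have h2 : u 0 = ((l.prod : SLd d) : Matrix (Fin (d+1)) (Fin (d+1)) ℂ).mulVec v := by
          simp [hudef]
        calc ‖((l.prod : SLd d) : Matrix (Fin (d+1)) (Fin (d+1)) ℂ).mulVec v‖
            = ‖w 0 + (u 0 - w 0)‖ := by rw [← h2]; congr 1; abel
          _ ≤ ‖w 0‖ + ‖u 0 - w 0‖ := norm_add_le _ _
          _ ≤ ‖w 0‖ + B * ‖v‖ := by linarith
      -- final numeric estimate
      set X : ℝ := (l.length : ℝ) + 1 with hXdef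
      have hX1 : (1:ℝ) ≤ X := by simp [hXdef]
      have hXp : X ^ n ≤ X ^ (n+1) := pow_le_pow_right₀ hX1 (by omega)
      have hXl : (l.length : ℝ) * X ^ n ≤ X ^ (n+1) := by
        have h1 : (l.length : ℝ) ≤ X := by simp [hXdef]
        have h2 : (0:ℝ) ≤ X ^ n := by positivity
        calc (l.length : ℝ) * X ^ n ≤ X * X ^ n :=
            mul_le_mul_of_nonneg_right h1 h2
          _ = X ^ (n+1) := by ring
      have hXo : (1:ℝ) ≤ X ^ (n+1) := one_le_pow₀ hX1
      have hv0 : (0:ℝ) ≤ ‖v‖ := norm_nonneg v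
      have hB0 : (0:ℝ) ≤ B := by linarith
      have hD0 : (0:ℝ) ≤ D := by linarith
      have hM0 : (0:ℝ) ≤ M := by linarith
      have A1 : 0 ≤ (X^(n+1) - X^n) * ‖v‖ := mul_nonneg (by linarith) hv0
      have A2 : 0 ≤ (X^(n+1) - (l.length : ℝ) * X^n) * ‖v‖ := mul_nonneg (by linarith) hv0
      have A3 : 0 ≤ (X^(n+1) - 1) * ‖v‖ := mul_nonneg (by linarith) hv0
      calc ‖((l.prod : SLd d) : Matrix (Fin (d+1)) (Fin (d+1)) ℂ).mulVec v‖
          ≤ ‖w 0‖ + B * ‖v‖ := hfin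
        _ ≤ D * X ^ n * ((1 + B) * ‖v‖)
            + (l.length : ℝ) * (D * X ^ n * (B * (1 + M) * ‖v‖)) + B * ‖v‖ := by
            rw [hXdef]; linarith [hw0]
        _ ≤ (D*(1+B) + D*(B*(1+M)) + B) * X ^ (n+1) * ‖v‖ := by
            nlinarith [mul_nonneg (mul_nonneg hD0 (by linarith : (0:ℝ) ≤ 1 + B)) A1,
              mul_nonneg (mul_nonneg hD0 (mul_nonneg hB0 (by linarith : (0:ℝ) ≤ 1 + M))) A2,
              mul_nonneg hB0 A3]
  -- use the top level of the flag
  have hk'd : k' ≤ d := by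
    have hrank : ∀ m : ℕ, ∀ hm : m < k' + 2, m ≤ Module.finrank ℂ (V ⟨m, hm⟩) := by
      intro m
      induction m with
      | zero => intro hm; omega
      | succ m ihm =>
        intro hm
        have h1 := ihm (by omega)
        have h2 : V ⟨m, by omega⟩ < V ⟨m+1, hm⟩ := hVmono (by simp [Fin.lt_def])
        have := Submodule.finrank_lt_finrank_of_lt h2
        omega
    have h1 := hrank (k'+1) (by omega)
    have h2 : (⟨k'+1, by omega⟩ : Fin (k'+2)) = Fin.last (k'+1) := by ext; simp [Fin.last]
    rw [h2, hVtop] at h1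
    have h3 : Module.finrank ℂ (⊤ : Submodule ℂ (Vd d)) = d + 1 := by
      rw [finrank_top]
      simp [Module.finrank_fin_fun]
    omega
  obtain ⟨D, hD1, hDb⟩ := key k' (by omega)
  have htop : ∀ x : Vd d, x ∈ V ⟨k'+1, by omega⟩ := by
    have h2 : (⟨k'+1, by omega⟩ : Fin (k'+2)) = Fin.last (k'+1) := by ext; simp [Fin.last]
    rw [h2, hVtop]
    exact fun x => trivial
  -- norm comparison between Euclidean and sup norms
  have e2 : ∀ y : EuclideanSpace ℂ (Fin (d+1)), ‖(WithLp.equiv 2 _ y : Vd d)‖ ≤ ‖y‖ := by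
    intro y
    rw [pi_norm_le_iff_of_nonneg (norm_nonneg y)]
    intro i
    have h1 : ‖(WithLp.equiv 2 _ y : Vd d) i‖ = ‖y i‖ := rfl
    rw [h1, EuclideanSpace.norm_eq]
    have h2 : ‖y i‖^2 ≤ ∑ j, ‖y j‖^2 :=
      Finset.single_le_sum (fun j _ => sq_nonneg ‖y j‖) (Finset.mem_univ i)
    calc ‖y i‖ = Real.sqrt (‖y i‖^2) := (Real.sqrt_sq (norm_nonneg _)).symm
      _ ≤ Real.sqrt (∑ j, ‖y j‖^2) := Real.sqrt_le_sqrt h2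
  have e1 : ∀ y : EuclideanSpace ℂ (Fin (d+1)),
      ‖y‖ ≤ Real.sqrt (d+1) * ‖(WithLp.equiv 2 _ y : Vd d)‖ := by
    intro y
    rw [EuclideanSpace.norm_eq]
    have h1 : ∑ j, ‖y j‖^2 ≤ (d+1 : ℝ) * ‖(WithLp.equiv 2 _ y : Vd d)‖^2 := by
      have h2 : ∀ j : Fin (d+1), ‖y j‖^2 ≤ ‖(WithLp.equiv 2 _ y : Vd d)‖^2 := by
        intro j
        have : ‖y j‖ ≤ ‖(WithLp.equiv 2 _ y : Vd d)‖ := norm_le_pi_norm _ j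
        exact pow_le_pow_left₀ (norm_nonneg _) this 2
      calc ∑ j, ‖y j‖^2 ≤ ∑ _j : Fin (d+1), ‖(WithLp.equiv 2 _ y : Vd d)‖^2 :=
          Finset.sum_le_sum fun j _ => h2 j
        _ = (d+1 : ℝ) * ‖(WithLp.equiv 2 _ y : Vd d)‖^2 := by
          rw [Finset.sum_const, Finset.card_univ, Fintype.card_fin, nsmul_eq_mul]
          push_cast; ring
    calc Real.sqrt (∑ j, ‖y j‖^2)
        ≤ Real.sqrt ((d+1 : ℝ) * ‖(WithLp.equiv 2 _ y : Vd d)‖^2) := Real.sqrt_le_sqrt h1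
      _ = Real.sqrt (d+1) * ‖(WithLp.equiv 2 _ y : Vd d)‖ := by
          rw [Real.sqrt_mul (by positivity), Real.sqrt_sq (norm_nonneg _)]
  -- final constant
  have hsq : (0:ℝ) < Real.sqrt (d+1) := Real.sqrt_pos.mpr (by positivity)
  have hD0 : (0:ℝ) < D := lt_of_lt_of_le one_pos hD1
  refine ⟨Real.sqrt (d+1) * (D * 2^d), by positivity, ?_⟩
  intro N hN idx
  set l : List (SLd d) := List.ofFn fun j => (g (idx j) : SLd d) with hldef
  have hlen : l.length = N := by simp [hldef]
  have hgen : Gen l := by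
    intro a ha
    rw [hldef, List.mem_ofFn] at ha
    obtain ⟨j, hj⟩ := ha
    exact ⟨idx j, hj.symm⟩
  have hN1 : (1:ℝ) ≤ (N:ℝ) := by exact_mod_cast hN
  have hpow : ((N : ℝ) + 1) ^ k' ≤ 2^d * (N:ℝ)^d := by
    calc ((N:ℝ)+1)^k' ≤ (2*(N:ℝ))^k' := pow_le_pow_left₀ (by linarith) (by linarith) k'
      _ = 2^k' * (N:ℝ)^k' := mul_pow _ _ _
      _ ≤ 2^d * (N:ℝ)^d :=
          mul_le_mul (pow_le_pow_right₀ one_le_two hk'd) (pow_le_pow_right₀ hN1 hk'd)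
            (by positivity) (by positivity)
  have hbound : ∀ x : Vd d, ‖((l.prod : SLd d) : Matrix (Fin (d+1)) (Fin (d+1)) ℂ).mulVec x‖
      ≤ (D * 2^d * (N:ℝ)^d) * ‖x‖ := by
    intro x
    have h1 := hDb l hgen x (htop x)
    rw [hlen] at h1
    refine h1.trans ?_
    calc D * ((N:ℝ)+1)^k' * ‖x‖ ≤ D * (2^d*(N:ℝ)^d) * ‖x‖ :=
        mul_le_mul_of_nonneg_right (mul_le_mul_of_nonneg_left hpow (by linarith)) (norm_nonneg x)
      _ = (D * 2^d * (N:ℝ)^d) * ‖x‖ := by ring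
  show opNorm _ ≤ _
  rw [opNorm]
  have hCN : (0:ℝ) ≤ Real.sqrt (d+1) * (D * 2^d) * (N:ℝ)^d := by positivity
  refine ContinuousLinearMap.opNorm_le_bound _ hCN fun x => ?_
  calc ‖(Matrix.toEuclideanCLM (𝕜 := ℂ) ((l.prod : SLd d) : Matrix (Fin (d+1)) (Fin (d+1)) ℂ)) x‖
      ≤ Real.sqrt (d+1) * ‖(WithLp.equiv 2 _ ((Matrix.toEuclideanCLM (𝕜 := ℂ)
          ((l.prod : SLd d) : Matrix (Fin (d+1)) (Fin (d+1)) ℂ)) x) : Vd d)‖ := e1 _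
    _ = Real.sqrt (d+1) *
        ‖((l.prod : SLd d) : Matrix (Fin (d+1)) (Fin (d+1)) ℂ).mulVec (WithLp.equiv 2 _ x)‖ := by
        rfl
    _ ≤ Real.sqrt (d+1) * ((D * 2^d * (N:ℝ)^d) * ‖(WithLp.equiv 2 _ x : Vd d)‖) := by
        have := hbound (WithLp.equiv 2 _ x)
        nlinarith
    _ ≤ Real.sqrt (d+1) * ((D * 2^d * (N:ℝ)^d) * ‖x‖) := by
        have := e2 x
        have h0 : (0:ℝ) ≤ D * 2^d * (N:ℝ)^d := by positivity
        nlinarith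
    _ = Real.sqrt (d+1) * (D * 2^d) * (N:ℝ)^d * ‖x‖ := by ring

end ComplexConvex
end
end
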